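/- Let G be a simple graph in which no shortest odd hole is jewelled, let H be a great pyramid in G with apex a, base {b1,b2,b3} and constituent paths P1,P2,P3, and let v be a vertex major for H having at most one neighbour in {b1,b2,b3}. Then v has neighbours in exactly two of the three sets V(P1)\{a}, V(P2)\{a}, V(P3)\{a}. -/

import Mathlib

open SimpleGraph

namespace SOH

variable {V : Type*}

/-- A walk is "induced" if every edge of `G` between vertices of the walk is an edge
of the walk. -/
def IsInducedWalk (G : SimpleGraph V) {u v : V} (P : G.Walk u v) : Prop :=
  ∀ x y : V, x ∈ P.support → y ∈ P.support → G.Adj x y → P.toSubgraph.Adj x y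

/-- The interior of a path: its vertices other than the two ends. -/
def interior (G : SimpleGraph V) {u v : V} (P : G.Walk u v) : Set V :=
  {x | x ∈ P.support} \ {u, v}

/-- A hole: an induced cycle of length at least 4. -/
def IsHole (G : SimpleGraph V) {u : V} (c : G.Walk u u) : Prop :=
  c.IsCycle ∧ 4 ≤ c.length ∧ IsInducedWalk G c

/-- An odd hole: a hole of odd length. -/
def IsOddHole (G : SimpleGraph V) {u : V} (c : G.Walk u u) : Prop :=
  IsHole G c ∧ Odd c.length

/-- A shortest odd hole: an odd hole of minimum length among all odd holes of `G`. -/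
def IsShortestOddHole (G : SimpleGraph V) {u : V} (c : G.Walk u u) : Prop :=
  IsOddHole G c ∧ ∀ (w : V) (d : G.Walk w w), IsOddHole G d → c.length ≤ d.length

/-- A vertex `v` is `C`-major if there is no three-vertex path of `C` containing all
neighbours of `v` in `V(C)`. -/
def CMajor (G : SimpleGraph V) {u : V} (c : G.Walk u u) (v : V) : Prop :=
  ¬ ∃ x y z : V, c.toSubgraph.Adj x y ∧ c.toSubgraph.Adj y z ∧ x ≠ z ∧
      ∀ w ∈ c.support, G.Adj v w → (w = x ∨ w = y ∨ w = z)

/-- A big `C`-major vertex: a `C`-major vertex with at least four neighbours in `V(C)`. -/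
def BigCMajor (G : SimpleGraph V) {u : V} (c : G.Walk u u) (v : V) : Prop :=
  CMajor G c v ∧ 4 ≤ {w | w ∈ c.support ∧ G.Adj v w}.ncard

/-- A hole `c` is jewelled. -/
def Jewelled (G : SimpleGraph V) {u : V} (c : G.Walk u u) : Prop :=
  (∃ c1 c2 c4 c5 c3 : V, ([c1, c2, c4, c5] : List V).Nodup ∧
      c.toSubgraph.Adj c1 c2 ∧ c.toSubgraph.Adj c2 c4 ∧ c.toSubgraph.Adj c4 c5 ∧
      G.Adj c3 c1 ∧ G.Adj c3 c5) ∨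
  (∃ c1 c3 c5 c2 c4 : V, ([c1, c3, c5] : List V).Nodup ∧
      c.toSubgraph.Adj c1 c3 ∧ c.toSubgraph.Adj c3 c5 ∧
      c2 ∉ c.support ∧ c4 ∉ c.support ∧ c2 ≠ c4 ∧
      G.Adj c1 c2 ∧ G.Adj c2 c4 ∧ G.Adj c4 c5 ∧
      ¬ G.Adj c1 c4 ∧ ¬ G.Adj c2 c5 ∧ ¬ G.Adj c1 c5)

/-- A pyramid in `G`, with apex `apex`, base `{b1, b2, b3}` and constituent paths
`P1, P2, P3`. -/
structure Pyramid (G : SimpleGraph V) where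
  apex : V
  b1 : V
  b2 : V
  b3 : V
  P1 : G.Walk apex b1
  P2 : G.Walk apex b2
  P3 : G.Walk apex b3
  distinct : ([apex, b1, b2, b3] : List V).Nodup
  isPath1 : P1.IsPath
  isPath2 : P2.IsPath
  isPath3 : P3.IsPath
  induced1 : IsInducedWalk G P1
  induced2 : IsInducedWalk G P2
  induced3 : IsInducedWalk G P3
  adj12 : G.Adj b1 b2
  adj13 : G.Adj b1 b3
  adj23 : G.Adj b2 b3
  twoLong : (2 ≤ P1.length ∧ 2 ≤ P2.length) ∨ (2 ≤ P1.length ∧ 2 ≤ P3.length) ∨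
      (2 ≤ P2.length ∧ 2 ≤ P3.length)
  disj12 : {x | x ∈ P1.support} ∩ {x | x ∈ P2.support} = {apex}
  disj13 : {x | x ∈ P1.support} ∩ {x | x ∈ P3.support} = {apex}
  disj23 : {x | x ∈ P2.support} ∩ {x | x ∈ P3.support} = {apex}
  edges12 : ∀ x y : V, x ∈ P1.support → y ∈ P2.support → x ≠ apex → y ≠ apex →
      G.Adj x y → x = b1 ∧ y = b2
  edges13 : ∀ x y : V, x ∈ P1.support → y ∈ P3.support → x ≠ apex → y ≠ apex →
      G.Adj x y → x = b1 ∧ y = b3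
  edges23 : ∀ x y : V, x ∈ P2.support → y ∈ P3.support → x ≠ apex → y ≠ apex →
      G.Adj x y → x = b2 ∧ y = b3

/-- The vertex set of a pyramid. -/
def Pyramid.verts {G : SimpleGraph V} (H : Pyramid G) : Set V :=
  {x | x ∈ H.P1.support} ∪ {x | x ∈ H.P2.support} ∪ {x | x ∈ H.P3.support}

/-- The closed walk `apex-P1-b1-b2-P2-apex` associated with a pyramid. -/
def Pyramid.hole {G : SimpleGraph V} (H : Pyramid G) : G.Walk H.apex H.apex :=
  H.P1.append (Walk.cons H.adj12 H.P2.reverse)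

/-- A great pyramid: the hole `apex-P1-b1-b2-P2-apex` is a shortest odd hole and `P3` is
strictly shorter than `P1` and `P2`. -/
structure GreatPyramid (G : SimpleGraph V) extends Pyramid G where
  holeShortest : IsShortestOddHole G toPyramid.hole
  short31 : toPyramid.P3.length < toPyramid.P1.length
  short32 : toPyramid.P3.length < toPyramid.P2.length

/-- The heart of a great pyramid: `V(P3) \ {apex}`. -/
def GreatPyramid.heart {G : SimpleGraph V} (H : GreatPyramid G) : Set V :=
  {x | x ∈ H.P3.support} \ {H.apex}

/-- An optimal great pyramid: one of minimum height (= length of `P3`). -/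
def GreatPyramid.Optimal {G : SimpleGraph V} (H : GreatPyramid G) : Prop :=
  ∀ H' : GreatPyramid G, H.P3.length ≤ H'.P3.length

/-- `L1, L2` are the two subpaths of the cycle `c` joining `u` and `v`. -/
def IsSplit (G : SimpleGraph V) {w u v : V} (c : G.Walk w w) (L1 L2 : G.Walk u v) : Prop :=
  L1.IsPath ∧ L2.IsPath ∧
  {x | x ∈ L1.support} ∩ {x | x ∈ L2.support} = {u, v} ∧
  {x | x ∈ L1.support} ∪ {x | x ∈ L2.support} = {x | x ∈ c.support} ∧
  (∀ e ∈ L1.edges, e ∈ c.edges) ∧ (∀ e ∈ L2.edges, e ∈ c.edges) ∧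
  L1.length + L2.length = c.length

/-- A shortcut for a (shortest odd) hole `c`: a path joining two distinct nonadjacent
vertices of `c`, shorter than both arcs of `c` between them, containing no big
`c`-major vertex. -/
def IsShortcut (G : SimpleGraph V) {w u v : V} (c : G.Walk w w) (P : G.Walk u v) : Prop :=
  u ∈ c.support ∧ v ∈ c.support ∧ u ≠ v ∧ ¬ G.Adj u v ∧ P.IsPath ∧
  (∀ L1 L2 : G.Walk u v, IsSplit G c L1 L2 → P.length < min L1.length L2.length) ∧
  ∀ x ∈ P.support, ¬ BigCMajor G c x


set_option linter.unusedSectionVars false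

open SimpleGraph.Walk

section Helpers

variable {G : SimpleGraph V} [DecidableEq V] {u w t x y z : V}

lemma length_zero_ends {p : G.Walk u w} (h : p.length = 0) : u = w := by
  cases p with
  | nil => rfl
  | cons h' q => simp at h

lemma path_loop_length {p : G.Walk u u} (hp : p.IsPath) : p.length = 0 := by
  cases p with
  | nil => rfl
  | cons h' q =>
    exfalso
    have h1 : u ∈ q.support := q.end_mem_support
    have := hp.support_nodup
    rw [support_cons, List.nodup_cons] at this
    exact this.1 h1

lemma support_of_length_one {p : G.Walk u w} (h : p.length = 1) : p.support = [u, w] := by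
  cases p with
  | nil => simp at h
  | cons h' q =>
    rw [length_cons, add_eq_right] at h
    have := length_zero_ends h
    subst this
    cases q with
    | nil => simp
    | cons h'' q' => simp at h

lemma adj_of_length_one {p : G.Walk u w} (h : p.length = 1) : G.Adj u w := by
  cases p with
  | nil => simp at h
  | cons h' q =>
    rw [length_cons, add_eq_right] at h
    have := length_zero_ends h
    subst this
    exact h'

lemma ends_ne_of_path {p : G.Walk u w} (hp : p.IsPath) (h : 0 < p.length) : u ≠ w := by
  intro he
  subst he
  rw [path_loop_length hp] at h
  exact Nat.lt_irrefl 0 h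

/-- In a path, the neighbour of the first vertex along an edge of the path is unique. -/
lemma edge_start_unique {p : G.Walk u w} (hp : p.support.Nodup)
    (hx : s(u, x) ∈ p.edges) (hy : s(u, y) ∈ p.edges) : x = y := by
  induction p with
  | nil => simp at hx
  | cons h' q ih =>
    rename_i a b c
    rw [support_cons, List.nodup_cons] at hp
    have key : ∀ t, s(a, t) ∈ (Walk.cons h' q).edges → t = b := by
      intro t hmem
      rw [edges_cons, List.mem_cons] at hmem
      rcases hmem with hmem | hmem
      · rw [Sym2.eq_iff] at hmem
        rcases hmem with ⟨-, h2⟩ | ⟨h1, h2⟩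
        · exact h2
        · exact absurd (h1 ▸ h') (G.irrefl)
      · exact absurd (q.fst_mem_support_of_mem_edges hmem) hp.1
    rw [key x hx, key y hy]

lemma edge_end_unique {p : G.Walk u w} (hp : p.support.Nodup)
    (hx : s(x, w) ∈ p.edges) (hy : s(y, w) ∈ p.edges) : x = y := by
  have hrev : p.reverse.support.Nodup := by rwa [support_reverse, List.nodup_reverse]
  have hx' : s(w, x) ∈ p.reverse.edges := by
    rw [edges_reverse, List.mem_reverse, Sym2.eq_swap]; exact hx
  have hy' : s(w, y) ∈ p.reverse.edges := by
    rw [edges_reverse, List.mem_reverse, Sym2.eq_swap]; exact hy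
  exact edge_start_unique hrev hx' hy'

/-- A path containing an edge between its two endpoints has length 1. -/
lemma edge_ends_length_one {p : G.Walk u w} (hp : p.IsPath) (he : s(u, w) ∈ p.edges) :
    p.length = 1 := by
  induction p with
  | nil => simp at he
  | cons h' q ih =>
    rename_i a b c
    have hnd := hp.support_nodup
    rw [support_cons, List.nodup_cons] at hnd
    rw [edges_cons, List.mem_cons] at he
    rcases he with he | he
    · rw [Sym2.eq_iff] at he
      rcases he with ⟨-, h2⟩ | ⟨h1, h2⟩
      · subst h2
        rw [length_cons, path_loop_length (hp.of_cons)]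
      · exact absurd (h1 ▸ h') (G.irrefl)
    · exact absurd (q.fst_mem_support_of_mem_edges he) hnd.1

lemma toSubgraph_adj_iff_mem_edges (p : G.Walk u w) :
    p.toSubgraph.Adj x y ↔ s(x, y) ∈ p.edges := by
  rw [← Subgraph.mem_edgeSet, mem_edges_toSubgraph]

lemma isInducedWalk_iff (p : G.Walk u w) :
    IsInducedWalk G p ↔
      ∀ x y : V, x ∈ p.support → y ∈ p.support → G.Adj x y → s(x, y) ∈ p.edges := by
  unfold IsInducedWalk
  refine forall₂_congr fun x y => ?_
  rw [toSubgraph_adj_iff_mem_edges]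

lemma takeUntil_start (p : G.Walk u w) (h : u ∈ p.support) : p.takeUntil u h = .nil := by
  cases p <;> simp [Walk.takeUntil]

lemma dropUntil_start (p : G.Walk u w) (h : u ∈ p.support) : p.dropUntil u h = p := by
  cases p <;> simp [Walk.dropUntil]

lemma takeUntil_append_left {m : V} (q : G.Walk u m) (r : G.Walk m w) (h : t ∈ q.support)
    (h' : t ∈ (q.append r).support) : (q.append r).takeUntil t h' = q.takeUntil t h := by
  induction q with
  | nil =>
    rw [mem_support_nil_iff] at h; subst h
    simp only [Walk.nil_append]
    rw [takeUntil_start, takeUntil_start]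
  | cons ha p ih =>
    rename_i a b c
    by_cases hx : a = t
    · subst hx; simp [Walk.takeUntil]
    · rw [support_cons, List.mem_cons] at h
      rcases h with h | h
      · exact absurd h.symm hx
      · simp only [Walk.cons_append, Walk.takeUntil, dif_neg hx]
        congr 1
        exact ih r h _

lemma dropUntil_append_right {m : V} (q : G.Walk u m) (r : G.Walk m w)
    (hq : t ∉ q.support) (h : t ∈ r.support)
    (h' : t ∈ (q.append r).support) :
    (q.append r).dropUntil t h' = r.dropUntil t h := by
  induction q with
  | nil => simp only [Walk.nil_append]
  | cons ha p ih =>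
    rename_i a b c
    rw [support_cons, List.mem_cons] at hq
    push_neg at hq
    simp only [Walk.cons_append, Walk.dropUntil, dif_neg (Ne.symm hq.1)]
    exact ih r hq.2 h _

lemma takeUntil_congr {p q : G.Walk u w} (h : p = q) (hp : t ∈ p.support) :
    p.takeUntil t hp = q.takeUntil t (h ▸ hp) := by subst h; rfl

lemma dropUntil_congr {p q : G.Walk u w} (h : p = q) (hp : t ∈ p.support) :
    p.dropUntil t hp = q.dropUntil t (h ▸ hp) := by subst h; rfl

lemma length_take_add_drop (p : G.Walk u w) (h : t ∈ p.support) :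
    (p.takeUntil t h).length + (p.dropUntil t h).length = p.length := by
  conv_rhs => rw [← take_spec p h]
  rw [length_append]

lemma mem_take_or_drop (p : G.Walk u w) (h : t ∈ p.support) {s : V} (hs : s ∈ p.support) :
    s ∈ (p.takeUntil t h).support ∨ s ∈ (p.dropUntil t h).support := by
  rw [← take_spec p h, mem_support_append_iff] at hs
  exact hs

/-- For a path, the take and drop parts meet only in the split vertex. -/
lemma take_inter_drop {p : G.Walk u w} (hp : p.IsPath) (h : t ∈ p.support)
    (hx1 : x ∈ (p.takeUntil t h).support) (hx2 : x ∈ (p.dropUntil t h).support) : x = t := by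
  have hnd := hp.support_nodup
  conv at hnd => rw [← take_spec p h]
  rw [support_append, List.nodup_append] at hnd
  rw [(p.dropUntil t h).support_eq_cons, List.mem_cons] at hx2
  rcases hx2 with h1 | h1
  · exact h1
  · exact ((hnd.2.2 _ hx1 _ h1 rfl).elim)

end Helpers

section Helpers2

variable {G : SimpleGraph V} [DecidableEq V] {u w t x y z : V}

lemma length_take_zero {p : G.Walk u w} (h : t ∈ p.support)
    (h0 : (p.takeUntil t h).length = 0) : t = u :=
  (length_zero_ends h0).symm

lemma length_drop_zero {p : G.Walk u w} (h : t ∈ p.support)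
    (h0 : (p.dropUntil t h).length = 0) : t = w :=
  length_zero_ends h0

/-- Key property of a minimiser of `dropUntil`-length: nothing in `S` lies strictly
beyond it. -/
lemma min_drop_key {p : G.Walk u w} (hp : p.IsPath) {S : Set V}
    (hS : ∀ s, s ∈ S → s ∈ p.support) {x' : V} (hx'S : x' ∈ S)
    (hmin : ∀ s (hs : s ∈ S),
      (p.dropUntil x' (hS x' hx'S)).length ≤ (p.dropUntil s (hS s hs)).length)
    (ht : t ∈ S) (htd : t ∈ (p.dropUntil x' (hS x' hx'S)).support) : t = x' := by
  by_contra hne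
  have htn : t ∉ (p.takeUntil x' (hS x' hx'S)).support := by
    intro hmem
    exact hne (take_inter_drop hp _ hmem htd)
  have heq : p.dropUntil t (hS t ht) = (p.dropUntil x' (hS x' hx'S)).dropUntil t htd := by
    have h2 := dropUntil_append_right (p.takeUntil x' (hS x' hx'S))
      (p.dropUntil x' (hS x' hx'S)) htn htd
      (by rw [take_spec]; exact hS t ht)
    rw [← h2]
    exact dropUntil_congr (take_spec p (hS x' hx'S)).symm _
  have hlt : (p.dropUntil t (hS t ht)).length < (p.dropUntil x' (hS x' hx'S)).length := by
    rw [heq]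
    have hsum := length_take_add_drop (p.dropUntil x' (hS x' hx'S)) htd
    have hpos : 0 < ((p.dropUntil x' (hS x' hx'S)).takeUntil t htd).length := by
      rcases Nat.eq_zero_or_pos ((p.dropUntil x' (hS x' hx'S)).takeUntil t htd).length with
        h0 | h0
      · exact absurd (length_take_zero htd h0) hne
      · exact h0
    omega
  exact absurd (hmin t ht) (by omega)

/-- Key property of a minimiser of `takeUntil`-length: nothing in `S` lies strictly
before it. -/
lemma min_take_key {p : G.Walk u w} (hp : p.IsPath) {S : Set V}
    (hS : ∀ s, s ∈ S → s ∈ p.support) {x' : V} (hx'S : x' ∈ S)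
    (hmin : ∀ s (hs : s ∈ S),
      (p.takeUntil x' (hS x' hx'S)).length ≤ (p.takeUntil s (hS s hs)).length)
    (ht : t ∈ S) (htd : t ∈ (p.takeUntil x' (hS x' hx'S)).support) : t = x' := by
  by_contra hne
  have heq : p.takeUntil t (hS t ht) = (p.takeUntil x' (hS x' hx'S)).takeUntil t htd := by
    have h2 := takeUntil_append_left (p.takeUntil x' (hS x' hx'S))
      (p.dropUntil x' (hS x' hx'S)) htd (by rw [take_spec]; exact hS t ht)
    rw [← h2]
    exact takeUntil_congr (take_spec p (hS x' hx'S)).symm _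
  have hlt : (p.takeUntil t (hS t ht)).length < (p.takeUntil x' (hS x' hx'S)).length := by
    rw [heq]
    have hsum := length_take_add_drop (p.takeUntil x' (hS x' hx'S)) htd
    have hpos : 0 < ((p.takeUntil x' (hS x' hx'S)).dropUntil t htd).length := by
      rcases Nat.eq_zero_or_pos ((p.takeUntil x' (hS x' hx'S)).dropUntil t htd).length with
        h0 | h0
      · exact absurd (length_drop_zero htd h0) hne
      · exact h0
    omega
  exact absurd (hmin t ht) (by omega)

/-- Edges of an induced path with both endpoints in the drop-part lie in the drop-part. -/
lemma induced_sub_drop {p : G.Walk u w} (hp : p.IsPath) (h : t ∈ p.support)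
    (he : s(x, y) ∈ p.edges) (hx : x ∈ (p.dropUntil t h).support)
    (hy : y ∈ (p.dropUntil t h).support) (hxy : x ≠ y) :
    s(x, y) ∈ (p.dropUntil t h).edges := by
  conv at he => rw [← take_spec p h]
  rw [edges_append, List.mem_append] at he
  rcases he with he | he
  · exfalso
    have hx' := (p.takeUntil t h).fst_mem_support_of_mem_edges he
    have hy' := (p.takeUntil t h).snd_mem_support_of_mem_edges he
    exact hxy ((take_inter_drop hp h hx' hx).trans (take_inter_drop hp h hy' hy).symm)
  · exact he

lemma induced_sub_take {p : G.Walk u w} (hp : p.IsPath) (h : t ∈ p.support)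
    (he : s(x, y) ∈ p.edges) (hx : x ∈ (p.takeUntil t h).support)
    (hy : y ∈ (p.takeUntil t h).support) (hxy : x ≠ y) :
    s(x, y) ∈ (p.takeUntil t h).edges := by
  conv at he => rw [← take_spec p h]
  rw [edges_append, List.mem_append] at he
  rcases he with he | he
  · exact he
  · exfalso
    have hx' := (p.dropUntil t h).fst_mem_support_of_mem_edges he
    have hy' := (p.dropUntil t h).snd_mem_support_of_mem_edges he
    exact hxy ((take_inter_drop hp h hx hx').trans (take_inter_drop hp h hy hy').symm)

lemma ncard_le_support (p : G.Walk u w) {M : Set V} (hM : ∀ s, s ∈ M → s ∈ p.support) :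
    M.ncard ≤ p.length + 1 := by
  have h1 : M ⊆ ↑p.support.toFinset := by
    intro s hs
    simp only [Finset.coe_sort_coe, List.coe_toFinset, Set.mem_setOf_eq]
    exact hM s hs
  calc M.ncard ≤ (↑p.support.toFinset : Set V).ncard :=
        Set.ncard_le_ncard h1 (p.support.toFinset : Finset V).finite_toSet
    _ = p.support.toFinset.card := Set.ncard_coe_finset _
    _ ≤ p.support.length := List.toFinset_card_le _
    _ = p.length + 1 := p.length_support

lemma ncard_le_three (x y z : V) : ({x, y, z} : Set V).ncard ≤ 3 := by
  calc ({x, y, z} : Set V).ncard ≤ ({y, z} : Set V).ncard + 1 := Set.ncard_insert_le _ _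
    _ ≤ (({z} : Set V).ncard + 1) + 1 := by
        have := Set.ncard_insert_le y ({z} : Set V)
        omega
    _ ≤ 3 := by rw [Set.ncard_singleton]

/-- The master rerouting lemma: an induced path `Q` between two nonadjacent vertices,
together with a vertex `z` off `Q` adjacent precisely to its two ends, forms a hole;
if the total length is odd it is an odd hole, hence at least as long as a shortest
odd hole. -/
lemma reroute {w₀ : V} {c : G.Walk w₀ w₀} (hc : IsShortestOddHole G c)
    {Q : G.Walk x y} (hQp : Q.IsPath)
    (hQi : ∀ s t : V, s ∈ Q.support → t ∈ Q.support → G.Adj s t → s(s, t) ∈ Q.edges)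
    (hxy : ¬ G.Adj x y) (hz : z ∉ Q.support) (hzx : G.Adj z x) (hzy : G.Adj z y)
    (hznb : ∀ t ∈ Q.support, G.Adj z t → t = x ∨ t = y)
    (hodd : Odd Q.length) : c.length ≤ Q.length + 2 := by
  have hxney : x ≠ y := by
    rintro rfl
    have : 0 < Q.length := by
      rcases hodd with ⟨k, hk⟩; omega
    exact (ends_ne_of_path hQp this) rfl
  have hQlen : Q.length ≠ 1 := fun h => hxy (adj_of_length_one h)
  have hQ3 : 3 ≤ Q.length := by
    rcases hodd with ⟨k, hk⟩; omega
  -- the cycle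
  set R : G.Walk x z := Q.concat hzy.symm with hR
  have hRsupp : R.support = Q.support ++ [z] := by
    rw [hR, support_concat]
  have hRedges : R.edges = Q.edges ++ [s(y, z)] := by
    rw [hR, edges_concat, List.concat_eq_append]
  set Z : G.Walk z z := Walk.cons hzx R with hZ
  have hZsupp : ∀ s, s ∈ Z.support ↔ (s = z ∨ s ∈ Q.support) := by
    intro s
    rw [hZ, support_cons, List.mem_cons, hRsupp, List.mem_append, List.mem_singleton]
    tauto
  have hZedges : Z.edges = s(z, x) :: (Q.edges ++ [s(y, z)]) := by
    rw [hZ, edges_cons, hRedges]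
  have hZlen : Z.length = Q.length + 2 := by
    rw [hZ, length_cons, hR, length_concat]
  have hZcyc : Z.IsCycle := by
    rw [hZ, Walk.cons_isCycle_iff]
    constructor
    · rw [isPath_def, hRsupp]
      rw [List.nodup_append]
      exact ⟨hQp.support_nodup, List.nodup_singleton z,
        fun a ha b hb hab => hz (by rw [List.mem_singleton] at hb; subst hb; subst hab; exact ha)⟩
    · rw [hRedges, List.mem_append, List.mem_singleton]
      rintro (hmem | hmem)
      · exact hz (Q.fst_mem_support_of_mem_edges hmem)
      · rw [Sym2.eq_iff] at hmem
        rcases hmem with ⟨h1, -⟩ | ⟨-, h2⟩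
        · exact ((h1 ▸ hzy).ne rfl).elim
        · exact hxney h2
  have hZind : IsInducedWalk G Z := by
    rw [isInducedWalk_iff]
    intro s t hs ht hadj
    rw [hZedges, List.mem_cons, List.mem_append, List.mem_singleton]
    rw [hZsupp] at hs ht
    rcases hs with rfl | hs
    · rcases ht with rfl | ht
      · exact (hadj.ne rfl).elim
      · rcases hznb t ht hadj with rfl | rfl
        · left; rfl
        · right; right; rw [Sym2.eq_swap]
    · rcases ht with rfl | ht
      · rcases hznb s hs hadj.symm with rfl | rfl
        · left; rw [Sym2.eq_swap]
        · right; right; rfl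
      · right; left; exact hQi s t hs ht hadj
  have hZhole : IsOddHole G Z := by
    refine ⟨⟨hZcyc, ?_, hZind⟩, ?_⟩
    · omega
    · rw [hZlen]
      rcases hodd with ⟨k, hk⟩
      exact ⟨k + 1, by omega⟩
  have := hc.2 z Z hZhole
  omega

end Helpers2


section Rev

variable {G : SimpleGraph V} {w₀ : V}

lemma isCycle_rev {c : G.Walk w₀ w₀} (hc : c.IsCycle) : c.reverse.IsCycle := by
  rw [Walk.isCycle_def] at hc ⊢
  obtain ⟨htr, hnil, hnd⟩ := hc
  refine ⟨?_, ?_, ?_⟩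
  · rw [Walk.isTrail_def, edges_reverse]
    exact (List.nodup_reverse).mpr htr.edges_nodup
  · intro h
    apply hnil
    have := congrArg Walk.reverse h
    rwa [reverse_reverse, reverse_nil] at this
  · rw [support_reverse]
    rcases he : c.support.tail with _ | ⟨y, ys⟩
    · have h0 : c.support = [w₀] := by rw [c.support_eq_cons, he]
      rw [h0]; simp
    · have hm : c.support.reverse = w₀ :: c.support.reverse.tail := by
        rw [← support_reverse]; exact c.reverse.support_eq_cons
      rcases hrev : (y :: ys).reverse with _ | ⟨z, zs⟩
      · simp at hrev
      · have h1 : c.support.reverse = z :: (zs ++ [w₀]) := by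
          conv_lhs => rw [c.support_eq_cons, he]
          rw [List.reverse_cons, hrev]
          simp
        have hz1 : z = w₀ := by
          rw [h1] at hm
          injection hm
        have htl : c.support.reverse.tail = zs ++ [w₀] := by rw [h1]; rfl
        rw [htl]
        have hnd2 : (z :: zs).Nodup := by
          rw [← hrev]
          exact (List.nodup_reverse).mpr (he ▸ hnd)
        rw [hz1] at hnd2
        rw [List.nodup_cons] at hnd2
        simp [List.nodup_append, hnd2.1, hnd2.2]
        exact fun a ha h => hnd2.1 (h ▸ ha)

lemma shortest_rev {c : G.Walk w₀ w₀} (hc : IsShortestOddHole G c) :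
    IsShortestOddHole G c.reverse := by
  obtain ⟨⟨⟨hcyc, hlen, hind⟩, hodd⟩, hmin⟩ := hc
  refine ⟨⟨⟨isCycle_rev hcyc, by rwa [length_reverse], ?_⟩, by rwa [length_reverse]⟩,
    fun w d hd => by rw [length_reverse]; exact hmin w d hd⟩
  intro x y hx hy hadj
  rw [support_reverse, List.mem_reverse] at hx hy
  have h2 := hind x y hx hy hadj
  rw [toSubgraph_reverse]
  exact h2

lemma bigCMajor_rev {c : G.Walk w₀ w₀} {v : V} (h : BigCMajor G c v) :
    BigCMajor G c.reverse v := by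
  obtain ⟨hmaj, hcard⟩ := h
  constructor
  · rintro ⟨x, y, z, h1, h2, h3, h4⟩
    refine hmaj ⟨x, y, z, by rwa [toSubgraph_reverse] at h1, by rwa [toSubgraph_reverse] at h2,
      h3, fun w hw hadj => h4 w ?_ hadj⟩
    rw [support_reverse, List.mem_reverse]
    exact hw
  · have : {w | w ∈ c.reverse.support ∧ G.Adj v w} = {w | w ∈ c.support ∧ G.Adj v w} := by
      ext w
      rw [Set.mem_setOf_eq, Set.mem_setOf_eq, support_reverse, List.mem_reverse]
    rw [this]
    exact hcard

end Rev

section Flip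

variable {G : SimpleGraph V}

/-- The pyramid with the roles of `b1` and `b2` exchanged. -/
def Pyramid.flip (P : Pyramid G) : Pyramid G where
  apex := P.apex
  b1 := P.b2
  b2 := P.b1
  b3 := P.b3
  P1 := P.P2
  P2 := P.P1
  P3 := P.P3
  distinct := by
    have := P.distinct
    simp only [List.nodup_cons, List.mem_cons, List.mem_singleton, List.not_mem_nil,
      or_false, List.nodup_nil, and_true] at this ⊢
    tauto
  isPath1 := P.isPath2
  isPath2 := P.isPath1
  isPath3 := P.isPath3
  induced1 := P.induced2
  induced2 := P.induced1
  induced3 := P.induced3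
  adj12 := P.adj12.symm
  adj13 := P.adj23
  adj23 := P.adj13
  twoLong := by rcases P.twoLong with ⟨h1, h2⟩ | ⟨h1, h2⟩ | ⟨h1, h2⟩ <;> tauto
  disj12 := by rw [Set.inter_comm]; exact P.disj12
  disj13 := P.disj23
  disj23 := P.disj13
  edges12 := fun x y hx hy hxa hya hadj =>
    ⟨(P.edges12 y x hy hx hya hxa hadj.symm).2, (P.edges12 y x hy hx hya hxa hadj.symm).1⟩
  edges13 := P.edges23
  edges23 := P.edges13

lemma Pyramid.flip_hole (P : Pyramid G) : P.flip.hole = P.hole.reverse := by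
  show P.P2.append (Walk.cons P.adj12.symm P.P1.reverse) = _
  rw [Pyramid.hole, reverse_append, reverse_cons, reverse_reverse]
  rw [← Walk.append_assoc]
  rfl

/-- The great pyramid with the roles of `b1` and `b2` exchanged. -/
def GreatPyramid.flip (H : GreatPyramid G) : GreatPyramid G where
  toPyramid := H.toPyramid.flip
  holeShortest := by
    rw [Pyramid.flip_hole]
    exact shortest_rev H.holeShortest
  short31 := H.short32
  short32 := H.short31

end Flip

section PyrBasic

variable {G : SimpleGraph V} [DecidableEq V] (H : GreatPyramid G)

lemma pyr_ne : H.apex ≠ H.b1 ∧ H.apex ≠ H.b2 ∧ H.apex ≠ H.b3 ∧ H.b1 ≠ H.b2 ∧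
    H.b1 ≠ H.b3 ∧ H.b2 ≠ H.b3 := by
  have := H.distinct
  simp only [List.nodup_cons, List.mem_cons, List.mem_singleton, List.not_mem_nil,
    or_false, List.nodup_nil, and_true] at this
  tauto

lemma mem_P1_P2 {w : V} (h1 : w ∈ H.P1.support) (h2 : w ∈ H.P2.support) : w = H.apex := by
  have : w ∈ ({x | x ∈ H.P1.support} ∩ {x | x ∈ H.P2.support} : Set V) := ⟨h1, h2⟩
  rw [H.disj12] at this
  exact this

lemma mem_P1_P3 {w : V} (h1 : w ∈ H.P1.support) (h2 : w ∈ H.P3.support) : w = H.apex := by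
  have : w ∈ ({x | x ∈ H.P1.support} ∩ {x | x ∈ H.P3.support} : Set V) := ⟨h1, h2⟩
  rw [H.disj13] at this
  exact this

lemma mem_P2_P3 {w : V} (h1 : w ∈ H.P2.support) (h2 : w ∈ H.P3.support) : w = H.apex := by
  have : w ∈ ({x | x ∈ H.P2.support} ∩ {x | x ∈ H.P3.support} : Set V) := ⟨h1, h2⟩
  rw [H.disj23] at this
  exact this

lemma p3_pos : 1 ≤ H.P3.length := by
  rcases Nat.eq_zero_or_pos H.P3.length with h | h
  · exact absurd (length_zero_ends h) (pyr_ne H).2.2.1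
  · exact h

lemma p1_two : 2 ≤ H.P1.length := by have := H.short31; have := p3_pos H; omega

lemma p2_two : 2 ≤ H.P2.length := by have := H.short32; have := p3_pos H; omega

lemma hole_support_iff {w : V} :
    w ∈ H.toPyramid.hole.support ↔ w ∈ H.P1.support ∨ w ∈ H.P2.support := by
  rw [Pyramid.hole, mem_support_append_iff, support_cons, List.mem_cons,
    support_reverse, List.mem_reverse]
  constructor
  · rintro (h | h | h)
    · exact Or.inl h
    · exact Or.inl (h ▸ H.P1.end_mem_support)
    · exact Or.inr h
  · rintro (h | h)
    · exact Or.inl h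
    · exact Or.inr (Or.inr h)

lemma hole_length : H.toPyramid.hole.length = H.P1.length + H.P2.length + 1 := by
  rw [Pyramid.hole, length_append, length_cons, length_reverse]
  omega

lemma hole_edges : H.toPyramid.hole.edges =
    H.P1.edges ++ s(H.b1, H.b2) :: H.P2.reverse.edges := by
  rw [Pyramid.hole, edges_append, edges_cons]

lemma b2_not_P1 : H.b2 ∉ H.P1.support :=
  fun h => (pyr_ne H).2.1 (mem_P1_P2 H h H.P2.end_mem_support).symm

lemma b1_not_P2 : H.b1 ∉ H.P2.support :=
  fun h => (pyr_ne H).1 (mem_P1_P2 H H.P1.end_mem_support h).symm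

lemma b3_not_P1 : H.b3 ∉ H.P1.support :=
  fun h => (pyr_ne H).2.2.1 (mem_P1_P3 H h H.P3.end_mem_support).symm

lemma b3_not_P2 : H.b3 ∉ H.P2.support :=
  fun h => (pyr_ne H).2.2.1 (mem_P2_P3 H h H.P3.end_mem_support).symm

lemma b1_not_P3 : H.b1 ∉ H.P3.support :=
  fun h => (pyr_ne H).1 (mem_P1_P3 H H.P1.end_mem_support h).symm

lemma b2_not_P3 : H.b2 ∉ H.P3.support :=
  fun h => (pyr_ne H).2.1 (mem_P2_P3 H H.P2.end_mem_support h).symm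

lemma base_pair {v s t : V}
    (hbase : (({H.b1, H.b2, H.b3} : Set V) ∩ {w | G.Adj v w}).ncard ≤ 1)
    (hs : s ∈ ({H.b1, H.b2, H.b3} : Set V)) (ht : t ∈ ({H.b1, H.b2, H.b3} : Set V))
    (has : G.Adj v s) (hat : G.Adj v t) : s = t := by
  by_contra hne
  have hsub : ({s, t} : Set V) ⊆ ({H.b1, H.b2, H.b3} : Set V) ∩ {w | G.Adj v w} := by
    intro x hx
    rcases hx with rfl | hx
    · exact ⟨hs, has⟩
    · rw [Set.mem_singleton_iff] at hx
      subst hx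
      exact ⟨ht, hat⟩
  have hfin : (({H.b1, H.b2, H.b3} : Set V) ∩ {w | G.Adj v w}).Finite :=
    ((Set.finite_singleton H.b3).insert H.b2 |>.insert H.b1).inter_of_left _
  have h2 := Set.ncard_le_ncard hsub hfin
  rw [Set.ncard_pair hne] at h2
  omega

end PyrBasic


section VNot

variable {G : SimpleGraph V} [DecidableEq V] (H : GreatPyramid G)

lemma no_three {P Q : V → Prop} (hP : ∀ x y, P x → P y → x = y)
    (hQ : ∀ x y, Q x → Q y → x = y) {w1 w2 w3 : V}
    (h1 : P w1 ∨ Q w1) (h2 : P w2 ∨ Q w2) (h3 : P w3 ∨ Q w3)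
    (d12 : w1 ≠ w2) (d13 : w1 ≠ w3) (d23 : w2 ≠ w3) : False := by
  rcases h1 with h1 | h1 <;> rcases h2 with h2 | h2 <;> rcases h3 with h3 | h3
  exacts [d12 (hP _ _ h1 h2), d12 (hP _ _ h1 h2), d13 (hP _ _ h1 h3), d23 (hQ _ _ h2 h3),
    d23 (hP _ _ h2 h3), d13 (hQ _ _ h1 h3), d12 (hQ _ _ h1 h2), d12 (hQ _ _ h1 h2)]

lemma nbr_set_finite (v : V) : {w | w ∈ H.toPyramid.hole.support ∧ G.Adj v w}.Finite :=
  (H.toPyramid.hole.support.finite_toSet).subset (fun _ hw => hw.1)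

lemma three_distinct_nbrs {v : V} (hmaj : BigCMajor G H.toPyramid.hole v) :
    ∃ w1 w2 w3 : V, (w1 ∈ H.toPyramid.hole.support ∧ G.Adj v w1) ∧
      (w2 ∈ H.toPyramid.hole.support ∧ G.Adj v w2) ∧
      (w3 ∈ H.toPyramid.hole.support ∧ G.Adj v w3) ∧ w1 ≠ w2 ∧ w1 ≠ w3 ∧ w2 ≠ w3 := by
  have h4 := hmaj.2
  have h2 : 2 < {w | w ∈ H.toPyramid.hole.support ∧ G.Adj v w}.ncard := by omega
  obtain ⟨a, ha, b, hb, c, hc, hab, hac, hbc⟩ :=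
    (Set.two_lt_ncard (nbr_set_finite H v)).mp h2
  exact ⟨a, b, c, ha, hb, hc, hab, hac, hbc⟩

lemma hole_induced : IsInducedWalk G H.toPyramid.hole := H.holeShortest.1.1.2.2

lemma v_not_P1 {v : V} (hmaj : BigCMajor G H.toPyramid.hole v) : v ∉ H.P1.support := by
  intro hv
  have hvhole : v ∈ H.toPyramid.hole.support := (hole_support_iff H).mpr (Or.inl hv)
  have hedge : ∀ w, w ∈ H.toPyramid.hole.support → G.Adj v w →
      s(v, w) ∈ H.P1.edges ∨ s(v, w) = s(H.b1, H.b2) ∨ s(v, w) ∈ H.P2.edges := by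
    intro w hw hadj
    have := (isInducedWalk_iff _).mp (hole_induced H) v w hvhole hw hadj
    rw [hole_edges, List.mem_append, List.mem_cons, edges_reverse, List.mem_reverse] at this
    tauto
  obtain ⟨w1, w2, w3, ⟨hs1, ha1⟩, ⟨hs2, ha2⟩, ⟨hs3, ha3⟩, d12, d13, d23⟩ :=
    three_distinct_nbrs H hmaj
  have hne := pyr_ne H
  by_cases hva : v = H.apex
  · -- buckets: first edge of P1 / first edge of P2
    subst hva
    refine no_three (P := fun w => s(H.apex, w) ∈ H.P1.edges)
      (Q := fun w => s(H.apex, w) ∈ H.P2.edges)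
      (fun x y hx hy => edge_start_unique H.isPath1.support_nodup hx hy)
      (fun x y hx hy => edge_start_unique H.isPath2.support_nodup hx hy)
      ?_ ?_ ?_ d12 d13 d23 <;>
    · first
      | (rcases hedge w1 hs1 ha1 with h | h | h
         · exact Or.inl h
         · rw [Sym2.eq_iff] at h
           rcases h with ⟨h1, -⟩ | ⟨h1, -⟩
           · exact absurd h1 hne.1
           · exact absurd h1 hne.2.1
         · exact Or.inr h)
      | (rcases hedge w2 hs2 ha2 with h | h | h
         · exact Or.inl h
         · rw [Sym2.eq_iff] at h
           rcases h with ⟨h1, -⟩ | ⟨h1, -⟩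
           · exact absurd h1 hne.1
           · exact absurd h1 hne.2.1
         · exact Or.inr h)
      | (rcases hedge w3 hs3 ha3 with h | h | h
         · exact Or.inl h
         · rw [Sym2.eq_iff] at h
           rcases h with ⟨h1, -⟩ | ⟨h1, -⟩
           · exact absurd h1 hne.1
           · exact absurd h1 hne.2.1
         · exact Or.inr h)
  · by_cases hvb : v = H.b1
    · -- buckets: last edge of P1 / the base edge b1b2
      have hkey : ∀ w, w ∈ H.toPyramid.hole.support → G.Adj v w →
          (s(v, w) ∈ H.P1.edges ∨ w = H.b2) := by
        intro w hw hadj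
        rcases hedge w hw hadj with h | h | h
        · exact Or.inl h
        · rw [Sym2.eq_iff] at h
          rcases h with ⟨-, h2⟩ | ⟨h1, -⟩
          · exact Or.inr h2
          · exact absurd (h1 ▸ hv) (b2_not_P1 H)
        · exfalso
          have hvP2 := H.P2.fst_mem_support_of_mem_edges h
          exact hva (mem_P1_P2 H hv hvP2)
      subst hvb
      refine no_three (P := fun w => s(H.b1, w) ∈ H.P1.edges) (Q := fun w => w = H.b2)
        (fun x y hx hy => ?_) (fun x y hx hy => hx.trans hy.symm)
        (hkey w1 hs1 ha1) (hkey w2 hs2 ha2) (hkey w3 hs3 ha3) d12 d13 d23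
      have hx' : s(x, H.b1) ∈ H.P1.edges := by rw [Sym2.eq_swap]; exact hx
      have hy' : s(y, H.b1) ∈ H.P1.edges := by rw [Sym2.eq_swap]; exact hy
      exact edge_end_unique H.isPath1.support_nodup hx' hy'
    · -- buckets: edge in takeUntil v / edge in dropUntil v
      have hkey : ∀ w, w ∈ H.toPyramid.hole.support → G.Adj v w →
          (s(v, w) ∈ (H.P1.takeUntil v hv).edges ∨ s(v, w) ∈ (H.P1.dropUntil v hv).edges) := by
        intro w hw hadj
        rcases hedge w hw hadj with h | h | h
        · conv at h => rw [← take_spec H.P1 hv]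
          rw [edges_append, List.mem_append] at h
          exact h
        · exfalso
          rw [Sym2.eq_iff] at h
          rcases h with ⟨h1, -⟩ | ⟨h1, -⟩
          · exact hvb h1
          · exact absurd (h1 ▸ hv) (b2_not_P1 H)
        · exfalso
          have hvP2 := H.P2.fst_mem_support_of_mem_edges h
          exact hva (mem_P1_P2 H hv hvP2)
      refine no_three (P := fun w => s(v, w) ∈ (H.P1.takeUntil v hv).edges)
        (Q := fun w => s(v, w) ∈ (H.P1.dropUntil v hv).edges)
        (fun x y hx hy => ?_) (fun x y hx hy =>
          edge_start_unique (H.isPath1.dropUntil hv).support_nodup hx hy)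
        (hkey w1 hs1 ha1) (hkey w2 hs2 ha2) (hkey w3 hs3 ha3) d12 d13 d23
      have hx' : s(x, v) ∈ (H.P1.takeUntil v hv).edges := by rw [Sym2.eq_swap]; exact hx
      have hy' : s(y, v) ∈ (H.P1.takeUntil v hv).edges := by rw [Sym2.eq_swap]; exact hy
      exact edge_end_unique (H.isPath1.takeUntil hv).support_nodup hx' hy'

lemma bigmajor_flip {v : V} (hmaj : BigCMajor G H.toPyramid.hole v) :
    BigCMajor G H.flip.toPyramid.hole v := by
  show BigCMajor G (H.toPyramid.flip.hole) v
  rw [Pyramid.flip_hole]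
  exact bigCMajor_rev hmaj

lemma v_not_P2 {v : V} (hmaj : BigCMajor G H.toPyramid.hole v) : v ∉ H.P2.support :=
  v_not_P1 H.flip (bigmajor_flip H hmaj)

lemma v_ne_apex {v : V} (hmaj : BigCMajor G H.toPyramid.hole v) : v ≠ H.apex := by
  intro h
  exact v_not_P1 H hmaj (h ▸ H.P1.start_mem_support)

lemma v_not_P3 {v : V} (hmaj : BigCMajor G H.toPyramid.hole v) : v ∉ H.P3.support := by
  intro hv
  have hsub : {w | w ∈ H.toPyramid.hole.support ∧ G.Adj v w} ⊆
      {H.apex, H.b1, H.b2} := by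
    rintro w ⟨hw, hadj⟩
    rcases (hole_support_iff H).mp hw with h1 | h1
    · by_cases hwa : w = H.apex
      · exact Or.inl hwa
      · have := H.edges13 w v h1 hv hwa (v_ne_apex H hmaj) hadj.symm
        exact Or.inr (Or.inl this.1)
    · by_cases hwa : w = H.apex
      · exact Or.inl hwa
      · have := H.edges23 w v h1 hv hwa (v_ne_apex H hmaj) hadj.symm
        exact Or.inr (Or.inr this.1)
  have hle := Set.ncard_le_ncard hsub
    ((Set.finite_singleton H.b2).insert H.b1 |>.insert H.apex)
  have h3 := ncard_le_three H.apex H.b1 H.b2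
  have h4 := hmaj.2
  omega

end VNot


section Parity

variable {G : SimpleGraph V} [DecidableEq V] (H : GreatPyramid G)

lemma parity13 : Odd (H.P1.length + H.P3.length) := by
  by_contra hpar
  have hne := pyr_ne H
  -- split the last edge off P3
  have hnotnil : ¬ H.P3.reverse.Nil :=
    Walk.not_nil_of_ne (fun h => hne.2.2.1 h.symm)
  obtain ⟨w', hadj, q, hq⟩ := Walk.not_nil_iff.mp hnotnil
  set R : G.Walk H.apex w' := q.reverse with hR
  have hP3 : H.P3 = R.concat hadj.symm := by
    have h1 := congrArg Walk.reverse hq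
    rwa [reverse_reverse, reverse_cons] at h1
  have hP3supp : H.P3.support = R.support ++ [H.b3] := by
    rw [hP3, support_concat]
  have hP3edges : H.P3.edges = R.edges ++ [s(w', H.b3)] := by
    rw [hP3, edges_concat, List.concat_eq_append]
  have hP3len : H.P3.length = R.length + 1 := by rw [hP3, length_concat]
  have hRpath : R.IsPath := by
    have h1 : (Walk.cons hadj q).IsPath := by rw [← hq]; exact H.isPath3.reverse
    exact h1.of_cons.reverse
  have hRsub : ∀ t, t ∈ R.support → t ∈ H.P3.support := by
    intro t ht; rw [hP3supp, List.mem_append]; exact Or.inl ht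
  have hb3R : H.b3 ∉ R.support := by
    intro hmem
    have h1 := H.isPath3.support_nodup
    rw [hP3supp, List.nodup_append] at h1
    exact h1.2.2 _ hmem _ (List.mem_singleton_self _) rfl
  have hw'R : w' ∈ R.support := R.end_mem_support
  have hw'P3 : w' ∈ H.P3.support := hRsub _ hw'R
  have hw'b3 : w' ≠ H.b3 := fun h => hb3R (h ▸ hw'R)
  -- membership in the rerouting path Q
  set Q : G.Walk H.b1 w' := H.P1.reverse.append R with hQdef
  have hQsupp : ∀ t, t ∈ Q.support ↔ t ∈ H.P1.support ∨ t ∈ R.support := by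
    intro t
    rw [hQdef, mem_support_append_iff, support_reverse, List.mem_reverse]
  have hQedges : Q.edges = H.P1.reverse.edges ++ R.edges := by rw [hQdef, edges_append]
  -- edges within P3 avoiding b3 are in R
  have hbothR : ∀ s t : V, s ∈ H.P3.support → t ∈ H.P3.support → s ≠ H.b3 → t ≠ H.b3 →
      G.Adj s t → s(s, t) ∈ R.edges := by
    intro s t hs ht hsb htb hadj'
    have h1 := (isInducedWalk_iff _).mp H.induced3 s t hs ht hadj'
    rw [hP3edges, List.mem_append, List.mem_singleton] at h1
    rcases h1 with h1 | h1
    · exact h1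
    · exfalso
      rw [Sym2.eq_iff] at h1
      rcases h1 with ⟨-, h2⟩ | ⟨h2, -⟩
      · exact htb h2
      · exact hsb h2
  have hQpath : Q.IsPath := by
    rw [isPath_def, hQdef, support_append, List.nodup_append]
    refine ⟨H.isPath1.reverse.support_nodup, ?_, ?_⟩
    · have h1 := hRpath.support_nodup
      rw [R.support_eq_cons] at h1
      exact h1.of_cons
    · rintro t ht1 _ ht2 rfl
      rw [support_reverse, List.mem_reverse] at ht1
      have ht2' : t ∈ R.support := List.mem_of_mem_tail ht2
      have hta : t = H.apex := mem_P1_P3 H ht1 (hRsub t ht2')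
      have h1 := hRpath.support_nodup
      rw [R.support_eq_cons, List.nodup_cons] at h1
      exact h1.1 (hta ▸ ht2)
  have hQind : ∀ s t : V, s ∈ Q.support → t ∈ Q.support → G.Adj s t → s(s, t) ∈ Q.edges := by
    intro s t hs ht hadj'
    rw [hQsupp] at hs ht
    rw [hQedges, List.mem_append]
    -- helper for the both-in-P1 case
    have hcase1 : s ∈ H.P1.support → t ∈ H.P1.support → s(s, t) ∈ H.P1.reverse.edges := by
      intro h1 h2
      rw [edges_reverse, List.mem_reverse]
      exact (isInducedWalk_iff _).mp H.induced1 s t h1 h2 hadj'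
    -- helper for the both-in-P3 case
    have hcase3 : s ∈ R.support ∨ s = H.apex → t ∈ R.support ∨ t = H.apex →
        s(s, t) ∈ R.edges := by
      intro h1 h2
      have hs3 : s ∈ H.P3.support := by
        rcases h1 with h1 | h1
        · exact hRsub s h1
        · exact h1 ▸ H.P3.start_mem_support
      have ht3 : t ∈ H.P3.support := by
        rcases h2 with h2 | h2
        · exact hRsub t h2
        · exact h2 ▸ H.P3.start_mem_support
      have hsb : s ≠ H.b3 := by
        rcases h1 with h1 | h1
        · exact fun h => hb3R (h ▸ h1)
        · exact fun h => hne.2.2.1 (h1 ▸ h : H.apex = H.b3)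
      have htb : t ≠ H.b3 := by
        rcases h2 with h2 | h2
        · exact fun h => hb3R (h ▸ h2)
        · exact fun h => hne.2.2.1 (h2 ▸ h : H.apex = H.b3)
      exact hbothR s t hs3 ht3 hsb htb hadj'
    rcases hs with hs | hs
    · rcases ht with ht | ht
      · exact Or.inl (hcase1 hs ht)
      · -- s ∈ P1, t ∈ R
        by_cases hsa : s = H.apex
        · exact Or.inr (hcase3 (Or.inr hsa) (Or.inl ht))
        · by_cases hta : t = H.apex
          · exact Or.inl (hcase1 hs (hta ▸ H.P1.start_mem_support))
          · exfalso
            have h1 := H.edges13 s t hs (hRsub t ht) hsa hta hadj'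
            exact hb3R (h1.2 ▸ ht)
    · rcases ht with ht | ht
      · by_cases hta : t = H.apex
        · exact Or.inr (hcase3 (Or.inl hs) (Or.inr hta))
        · by_cases hsa : s = H.apex
          · exact Or.inl (hcase1 (hsa ▸ H.P1.start_mem_support) ht)
          · exfalso
            have h1 := H.edges13 t s ht (hRsub s hs) hta hsa hadj'.symm
            exact hb3R (h1.2 ▸ hs)
      · exact Or.inr (hcase3 (Or.inl hs) (Or.inl ht))
  have hxy : ¬ G.Adj H.b1 w' := by
    intro hadj'
    by_cases hw'a : w' = H.apex
    · have hadj2 : G.Adj H.b1 H.apex := hw'a ▸ hadj'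
      have h1 := (isInducedWalk_iff _).mp H.induced1 H.b1 H.apex H.P1.end_mem_support
        H.P1.start_mem_support hadj2
      have h2 : s(H.apex, H.b1) ∈ H.P1.edges := by rw [Sym2.eq_swap]; exact h1
      have h3 := edge_ends_length_one H.isPath1 h2
      have := p1_two H
      omega
    · have h1 := H.edges13 H.b1 w' H.P1.end_mem_support hw'P3 (fun h => hne.1 h.symm)
        hw'a hadj'
      exact hw'b3 h1.2
  have hzQ : H.b3 ∉ Q.support := by
    rw [hQsupp]
    rintro (h | h)
    · exact b3_not_P1 H h
    · exact hb3R h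
  have hznb : ∀ t ∈ Q.support, G.Adj H.b3 t → t = H.b1 ∨ t = w' := by
    intro t ht hadj'
    rw [hQsupp] at ht
    by_cases hta : t = H.apex
    · have hadj2 : G.Adj H.apex H.b3 := (hta ▸ hadj').symm
      have h1 := (isInducedWalk_iff _).mp H.induced3 H.apex H.b3
        H.P3.start_mem_support H.P3.end_mem_support hadj2
      have h3 := edge_ends_length_one H.isPath3 h1
      have hR0 : R.length = 0 := by omega
      exact Or.inr (hta.trans (length_zero_ends hR0))
    · rcases ht with ht | ht
      · have h1 := H.edges13 t H.b3 ht H.P3.end_mem_support hta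
          (fun h => hne.2.2.1 h.symm) hadj'.symm
        exact Or.inl h1.1
      · have h1 := (isInducedWalk_iff _).mp H.induced3 H.b3 t H.P3.end_mem_support
          (hRsub t ht) hadj'
        rw [hP3edges, List.mem_append, List.mem_singleton] at h1
        rcases h1 with h1 | h1
        · exact absurd (R.fst_mem_support_of_mem_edges h1) hb3R
        · rw [Sym2.eq_iff] at h1
          rcases h1 with ⟨h2, -⟩ | ⟨-, h2⟩
          · exact absurd (h2 ▸ hw'R : H.b3 ∈ R.support) hb3R
          · exact Or.inr h2
  have hQlen : Q.length = H.P1.length + R.length := by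
    rw [hQdef, length_append, length_reverse]
  have hodd : Odd Q.length := by
    rw [Nat.odd_iff]
    rw [Nat.odd_iff] at hpar
    omega
  have hfin := reroute H.holeShortest hQpath hQind hxy hzQ H.adj13.symm hadj hznb hodd
  have hhl := hole_length H
  have := H.short32
  omega

lemma parity23 : Odd (H.P2.length + H.P3.length) := parity13 H.flip

end Parity


section Extremal

variable {G : SimpleGraph V} [DecidableEq V] {u b x' : V}

lemma exists_min_drop (p : G.Walk u b) (hp : p.IsPath) (S : Set V)
    (hS : ∀ s, s ∈ S → s ∈ p.support) (hne : S.Nonempty) :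
    ∃ x', ∃ hx' : x' ∈ p.support, x' ∈ S ∧
      (∀ t, t ∈ S → t ∈ (p.dropUntil x' hx').support → t = x') ∧
      (∀ t (ht : t ∈ S), (p.dropUntil x' hx').length ≤ (p.dropUntil t (hS t ht)).length) := by
  have hfin : S.Finite := (p.support.finite_toSet).subset hS
  obtain ⟨x', hx'S, hmin⟩ := Set.exists_min_image S
    (fun t => if h : t ∈ p.support then (p.dropUntil t h).length else 0) hfin hne
  have hmin' : ∀ t (ht : t ∈ S),
      (p.dropUntil x' (hS x' hx'S)).length ≤ (p.dropUntil t (hS t ht)).length := by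
    intro t ht
    have h1 := hmin t ht
    rwa [dif_pos (hS x' hx'S), dif_pos (hS t ht)] at h1
  exact ⟨x', hS x' hx'S, hx'S,
    fun t ht htd => min_drop_key hp hS hx'S hmin' ht htd, hmin'⟩

lemma exists_min_take (p : G.Walk u b) (hp : p.IsPath) (S : Set V)
    (hS : ∀ s, s ∈ S → s ∈ p.support) (hne : S.Nonempty) :
    ∃ x', ∃ hx' : x' ∈ p.support, x' ∈ S ∧
      (∀ t, t ∈ S → t ∈ (p.takeUntil x' hx').support → t = x') ∧
      (∀ t (ht : t ∈ S), (p.takeUntil x' hx').length ≤ (p.takeUntil t (hS t ht)).length) := by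
  have hfin : S.Finite := (p.support.finite_toSet).subset hS
  obtain ⟨x', hx'S, hmin⟩ := Set.exists_min_image S
    (fun t => if h : t ∈ p.support then (p.takeUntil t h).length else 0) hfin hne
  have hmin' : ∀ t (ht : t ∈ S),
      (p.takeUntil x' (hS x' hx'S)).length ≤ (p.takeUntil t (hS t ht)).length := by
    intro t ht
    have h1 := hmin t ht
    rwa [dif_pos (hS x' hx'S), dif_pos (hS t ht)] at h1
  exact ⟨x', hS x' hx'S, hx'S,
    fun t ht htd => min_take_key hp hS hx'S hmin' ht htd, hmin'⟩

lemma start_not_in_drop {p : G.Walk u b} (hp : p.IsPath) (hx' : x' ∈ p.support)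
    (hne : x' ≠ u) : u ∉ (p.dropUntil x' hx').support := by
  intro h
  exact hne (take_inter_drop hp hx' (p.takeUntil x' hx').start_mem_support h).symm

lemma end_not_in_take {p : G.Walk u b} (hp : p.IsPath) (hx' : x' ∈ p.support)
    (hne : x' ≠ b) : b ∉ (p.takeUntil x' hx').support := by
  intro h
  exact hne (take_inter_drop hp hx' h (p.dropUntil x' hx').end_mem_support).symm

end Extremal

section Claim2

variable {G : SimpleGraph V} [DecidableEq V] (H : GreatPyramid G)

lemma claim2 {v : V} (hmaj : BigCMajor G H.toPyramid.hole v)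
    (hbase : (({H.b1, H.b2, H.b3} : Set V) ∩ {w | G.Adj v w}).ncard ≤ 1)
    (hA1 : ∃ w, w ∈ H.P1.support ∧ w ≠ H.apex ∧ G.Adj v w)
    (hA2 : ∃ w, w ∈ H.P2.support ∧ w ≠ H.apex ∧ G.Adj v w)
    (hA3 : ∃ w, w ∈ H.P3.support ∧ w ≠ H.apex ∧ G.Adj v w) : False := by
  have hne := pyr_ne H
  have hvP1 := v_not_P1 H hmaj
  have hvP2 := v_not_P2 H hmaj
  have hvP3 := v_not_P3 H hmaj
  -- the three extremal neighbours
  obtain ⟨x', hx'supp, ⟨hx'P1, hx'a, hx'v⟩, hx'key, -⟩ :=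
    exists_min_drop H.P1 H.isPath1 {t | t ∈ H.P1.support ∧ t ≠ H.apex ∧ G.Adj v t}
      (fun s hs => hs.1) (by obtain ⟨w, hw⟩ := hA1; exact ⟨w, hw⟩)
  obtain ⟨y', hy'supp, ⟨hy'P2, hy'a, hy'v⟩, hy'key, -⟩ :=
    exists_min_drop H.P2 H.isPath2 {t | t ∈ H.P2.support ∧ t ≠ H.apex ∧ G.Adj v t}
      (fun s hs => hs.1) (by obtain ⟨w, hw⟩ := hA2; exact ⟨w, hw⟩)
  obtain ⟨u', hu'supp, ⟨hu'P3r, hu'a, hu'v⟩, hu'key, -⟩ :=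
    exists_min_take H.P3.reverse H.isPath3.reverse
      {t | t ∈ H.P3.reverse.support ∧ t ≠ H.apex ∧ G.Adj v t}
      (fun s hs => hs.1)
      (by obtain ⟨w, h1, h2, h3⟩ := hA3
          exact ⟨w, by rw [support_reverse, List.mem_reverse]; exact h1, h2, h3⟩)
  have hu'P3 : u' ∈ H.P3.support := by
    rw [support_reverse, List.mem_reverse] at hu'P3r; exact hu'P3r
  set A := H.P1.dropUntil x' hx'supp with hAdef
  set C := H.P2.dropUntil y' hy'supp with hCdef
  set B := H.P3.reverse.takeUntil u' hu'supp with hBdef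
  have hApath : A.IsPath := H.isPath1.dropUntil hx'supp
  have hCpath : C.IsPath := H.isPath2.dropUntil hy'supp
  have hBpath : B.IsPath := H.isPath3.reverse.takeUntil hu'supp
  have hAsub : ∀ t, t ∈ A.support → t ∈ H.P1.support :=
    fun t ht => support_dropUntil_subset _ _ ht
  have hCsub : ∀ t, t ∈ C.support → t ∈ H.P2.support :=
    fun t ht => support_dropUntil_subset _ _ ht
  have hBsub : ∀ t, t ∈ B.support → t ∈ H.P3.support := by
    intro t ht
    have := support_takeUntil_subset _ _ ht
    rwa [support_reverse, List.mem_reverse] at this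
  have haA : H.apex ∉ A.support := start_not_in_drop H.isPath1 hx'supp hx'a
  have haC : H.apex ∉ C.support := start_not_in_drop H.isPath2 hy'supp hy'a
  have haB : H.apex ∉ B.support := end_not_in_take H.isPath3.reverse hu'supp hu'a
  have hAnbr : ∀ t, t ∈ A.support → G.Adj v t → t = x' := by
    intro t ht hadj
    refine hx'key t ⟨hAsub t ht, ?_, hadj⟩ ht
    intro h; exact haA (h ▸ ht)
  have hCnbr : ∀ t, t ∈ C.support → G.Adj v t → t = y' := by
    intro t ht hadj
    refine hy'key t ⟨hCsub t ht, ?_, hadj⟩ ht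
    intro h; exact haC (h ▸ ht)
  have hBnbr : ∀ t, t ∈ B.support → G.Adj v t → t = u' := by
    intro t ht hadj
    refine hu'key t ⟨support_takeUntil_subset _ _ ht, ?_, hadj⟩ ht
    intro h; exact haB (h ▸ ht)
  -- induced characterisations for the pieces
  have hAind : ∀ s t, s ∈ A.support → t ∈ A.support → G.Adj s t → s(s, t) ∈ A.edges := by
    intro s t hs ht hadj
    exact induced_sub_drop H.isPath1 hx'supp
      ((isInducedWalk_iff _).mp H.induced1 s t (hAsub s hs) (hAsub t ht) hadj) hs ht hadj.ne
  have hCind : ∀ s t, s ∈ C.support → t ∈ C.support → G.Adj s t → s(s, t) ∈ C.edges := by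
    intro s t hs ht hadj
    exact induced_sub_drop H.isPath2 hy'supp
      ((isInducedWalk_iff _).mp H.induced2 s t (hCsub s hs) (hCsub t ht) hadj) hs ht hadj.ne
  have hBind : ∀ s t, s ∈ B.support → t ∈ B.support → G.Adj s t → s(s, t) ∈ B.edges := by
    intro s t hs ht hadj
    refine induced_sub_take H.isPath3.reverse hu'supp ?_ hs ht hadj.ne
    rw [edges_reverse, List.mem_reverse]
    exact (isInducedWalk_iff _).mp H.induced3 s t (hBsub s hs) (hBsub t ht) hadj
  have hx'ne_u' : ¬ (x' = H.b1 ∧ u' = H.b3) := by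
    rintro ⟨rfl, rfl⟩
    exact hne.2.2.2.2.1 (base_pair H hbase (by left; rfl) (by right; right; rfl) hx'v hu'v)
  have hy'ne_u' : ¬ (y' = H.b2 ∧ u' = H.b3) := by
    rintro ⟨rfl, rfl⟩
    exact hne.2.2.2.2.2 (base_pair H hbase (by right; left; rfl) (by right; right; rfl)
      hy'v hu'v)
  have hx'ne_y' : ¬ (x' = H.b1 ∧ y' = H.b2) := by
    rintro ⟨rfl, rfl⟩
    exact hne.2.2.2.1 (base_pair H hbase (by left; rfl) (by right; left; rfl) hx'v hy'v)
  -- lengths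
  have htxA := length_take_add_drop H.P1 hx'supp
  have htyC := length_take_add_drop H.P2 hy'supp
  have htuB := length_take_add_drop H.P3.reverse hu'supp
  rw [← hAdef] at htxA
  rw [← hCdef] at htyC
  rw [← hBdef] at htuB
  have hP3rlen : H.P3.reverse.length = H.P3.length := length_reverse _
  have htxpos : 1 ≤ (H.P1.takeUntil x' hx'supp).length := by
    rcases Nat.eq_zero_or_pos (H.P1.takeUntil x' hx'supp).length with h | h
    · exact absurd (length_take_zero hx'supp h) hx'a
    · exact h
  have htypos : 1 ≤ (H.P2.takeUntil y' hy'supp).length := by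
    rcases Nat.eq_zero_or_pos (H.P2.takeUntil y' hy'supp).length with h | h
    · exact absurd (length_take_zero hy'supp h) hy'a
    · exact h
  have hdupos : 1 ≤ (H.P3.reverse.dropUntil u' hu'supp).length := by
    rcases Nat.eq_zero_or_pos (H.P3.reverse.dropUntil u' hu'supp).length with h | h
    · exact absurd (length_drop_zero hu'supp h) hu'a
    · exact h
  have hs31 := H.short31
  have hs32 := H.short32
  have hhl := hole_length H
  have h4 := hmaj.2
  -- generic pieces for building the three rerouting paths
  have hABdisj : ∀ t, t ∈ A.support → t ∈ B.support → False := by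
    intro t ht1 ht2
    exact haA ((mem_P1_P3 H (hAsub t ht1) (hBsub t ht2)) ▸ ht1)
  have hCBdisj : ∀ t, t ∈ C.support → t ∈ B.support → False := by
    intro t ht1 ht2
    exact haC ((mem_P2_P3 H (hCsub t ht1) (hBsub t ht2)) ▸ ht1)
  have hACdisj : ∀ t, t ∈ A.support → t ∈ C.support → False := by
    intro t ht1 ht2
    exact haA ((mem_P1_P2 H (hAsub t ht1) (hCsub t ht2)) ▸ ht1)
  -- Q4 : from x' along P1 to b1, then b3, then back along P3 to u'
  have hE4 : ¬ Odd (A.length + (1 + B.length)) := by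
    intro hodd
    set Q : G.Walk x' u' := A.append (Walk.cons H.adj13 B) with hQdef
    have hQsupp : ∀ t, t ∈ Q.support ↔ t ∈ A.support ∨ t ∈ B.support := by
      intro t
      rw [hQdef, mem_support_append_iff, support_cons, List.mem_cons]
      constructor
      · rintro (h | h | h)
        · exact Or.inl h
        · exact Or.inl (h ▸ A.end_mem_support)
        · exact Or.inr h
      · rintro (h | h)
        · exact Or.inl h
        · exact Or.inr (Or.inr h)
    have hQpath : Q.IsPath := by
      rw [isPath_def, hQdef, support_append, support_cons, List.tail_cons, List.nodup_append]
      exact ⟨hApath.support_nodup, hBpath.support_nodup, fun t h1 _ h2 h => by subst h; exact hABdisj _ h1 h2⟩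
    have hQedges : Q.edges = A.edges ++ (s(H.b1, H.b3) :: B.edges) := by
      rw [hQdef, edges_append, edges_cons]
    have hQind : ∀ s t, s ∈ Q.support → t ∈ Q.support → G.Adj s t → s(s, t) ∈ Q.edges := by
      intro s t hs ht hadj
      rw [hQsupp] at hs ht
      rw [hQedges, List.mem_append, List.mem_cons]
      rcases hs with hs | hs <;> rcases ht with ht | ht
      · exact Or.inl (hAind s t hs ht hadj)
      · have h1 := H.edges13 s t (hAsub s hs) (hBsub t ht)
          (fun h => haA (h ▸ hs)) (fun h => haB (h ▸ ht)) hadj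
        exact Or.inr (Or.inl (by rw [h1.1, h1.2]))
      · have h1 := H.edges13 t s (hAsub t ht) (hBsub s hs)
          (fun h => haA (h ▸ ht)) (fun h => haB (h ▸ hs)) hadj.symm
        exact Or.inr (Or.inl (by rw [h1.1, h1.2, Sym2.eq_swap]))
      · exact Or.inr (Or.inr (hBind s t hs ht hadj))
    have hxy : ¬ G.Adj x' u' := by
      intro hadj
      exact hx'ne_u' (H.edges13 x' u' hx'P1 hu'P3 hx'a hu'a hadj)
    have hz : v ∉ Q.support := by
      rw [hQsupp]
      rintro (h | h)
      · exact hvP1 (hAsub v h)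
      · exact hvP3 (hBsub v h)
    have hznb : ∀ t ∈ Q.support, G.Adj v t → t = x' ∨ t = u' := by
      intro t ht hadj
      rw [hQsupp] at ht
      rcases ht with ht | ht
      · exact Or.inl (hAnbr t ht hadj)
      · exact Or.inr (hBnbr t ht hadj)
    have hQlen : Q.length = A.length + (1 + B.length) := by
      rw [hQdef, length_append, length_cons]
      omega
    have hfin := reroute H.holeShortest hQpath hQind hxy hz hx'v hu'v hznb (hQlen ▸ hodd)
    rw [hQlen] at hfin
    omega
  -- Q5 : from y' along P2 to b2, then b3, then back along P3 to u'
  have hE5 : ¬ Odd (C.length + (1 + B.length)) := by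
    intro hodd
    set Q : G.Walk y' u' := C.append (Walk.cons H.adj23 B) with hQdef
    have hQsupp : ∀ t, t ∈ Q.support ↔ t ∈ C.support ∨ t ∈ B.support := by
      intro t
      rw [hQdef, mem_support_append_iff, support_cons, List.mem_cons]
      constructor
      · rintro (h | h | h)
        · exact Or.inl h
        · exact Or.inl (h ▸ C.end_mem_support)
        · exact Or.inr h
      · rintro (h | h)
        · exact Or.inl h
        · exact Or.inr (Or.inr h)
    have hQpath : Q.IsPath := by
      rw [isPath_def, hQdef, support_append, support_cons, List.tail_cons, List.nodup_append]
      exact ⟨hCpath.support_nodup, hBpath.support_nodup, fun t h1 _ h2 h => by subst h; exact hCBdisj _ h1 h2⟩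
    have hQedges : Q.edges = C.edges ++ (s(H.b2, H.b3) :: B.edges) := by
      rw [hQdef, edges_append, edges_cons]
    have hQind : ∀ s t, s ∈ Q.support → t ∈ Q.support → G.Adj s t → s(s, t) ∈ Q.edges := by
      intro s t hs ht hadj
      rw [hQsupp] at hs ht
      rw [hQedges, List.mem_append, List.mem_cons]
      rcases hs with hs | hs <;> rcases ht with ht | ht
      · exact Or.inl (hCind s t hs ht hadj)
      · have h1 := H.edges23 s t (hCsub s hs) (hBsub t ht)
          (fun h => haC (h ▸ hs)) (fun h => haB (h ▸ ht)) hadj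
        exact Or.inr (Or.inl (by rw [h1.1, h1.2]))
      · have h1 := H.edges23 t s (hCsub t ht) (hBsub s hs)
          (fun h => haC (h ▸ ht)) (fun h => haB (h ▸ hs)) hadj.symm
        exact Or.inr (Or.inl (by rw [h1.1, h1.2, Sym2.eq_swap]))
      · exact Or.inr (Or.inr (hBind s t hs ht hadj))
    have hxy : ¬ G.Adj y' u' := by
      intro hadj
      exact hy'ne_u' (H.edges23 y' u' hy'P2 hu'P3 hy'a hu'a hadj)
    have hz : v ∉ Q.support := by
      rw [hQsupp]
      rintro (h | h)
      · exact hvP2 (hCsub v h)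
      · exact hvP3 (hBsub v h)
    have hznb : ∀ t ∈ Q.support, G.Adj v t → t = y' ∨ t = u' := by
      intro t ht hadj
      rw [hQsupp] at ht
      rcases ht with ht | ht
      · exact Or.inl (hCnbr t ht hadj)
      · exact Or.inr (hBnbr t ht hadj)
    have hQlen : Q.length = C.length + (1 + B.length) := by
      rw [hQdef, length_append, length_cons]
      omega
    have hfin := reroute H.holeShortest hQpath hQind hxy hz hy'v hu'v hznb (hQlen ▸ hodd)
    rw [hQlen] at hfin
    omega
  -- Q3 : from x' along P1 to b1, then b2, then back along P2 to y'
  have hodd3 : Odd (A.length + (1 + C.length)) := by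
    rw [Nat.odd_iff]
    rw [Nat.odd_iff] at hE4 hE5
    omega
  set Q : G.Walk x' y' := A.append (Walk.cons H.adj12 C.reverse) with hQdef
  have hCrsupp : ∀ t, t ∈ C.reverse.support ↔ t ∈ C.support := by
    intro t; rw [support_reverse, List.mem_reverse]
  have hQsupp : ∀ t, t ∈ Q.support ↔ t ∈ A.support ∨ t ∈ C.support := by
    intro t
    rw [hQdef, mem_support_append_iff, support_cons, List.mem_cons, hCrsupp]
    constructor
    · rintro (h | h | h)
      · exact Or.inl h
      · exact Or.inl (h ▸ A.end_mem_support)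
      · exact Or.inr h
    · rintro (h | h)
      · exact Or.inl h
      · exact Or.inr (Or.inr h)
  have hQpath : Q.IsPath := by
    rw [isPath_def, hQdef, support_append, support_cons, List.tail_cons, List.nodup_append]
    refine ⟨hApath.support_nodup, hCpath.reverse.support_nodup, ?_⟩
    rintro t h1 _ h2 rfl
    rw [hCrsupp] at h2
    exact hACdisj t h1 h2
  have hQedges : Q.edges = A.edges ++ (s(H.b1, H.b2) :: C.reverse.edges) := by
    rw [hQdef, edges_append, edges_cons]
  have hCredges : ∀ e, e ∈ C.reverse.edges ↔ e ∈ C.edges := by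
    intro e; rw [edges_reverse, List.mem_reverse]
  have hQind : ∀ s t, s ∈ Q.support → t ∈ Q.support → G.Adj s t → s(s, t) ∈ Q.edges := by
    intro s t hs ht hadj
    rw [hQsupp] at hs ht
    rw [hQedges, List.mem_append, List.mem_cons, hCredges]
    rcases hs with hs | hs <;> rcases ht with ht | ht
    · exact Or.inl (hAind s t hs ht hadj)
    · have h1 := H.edges12 s t (hAsub s hs) (hCsub t ht)
        (fun h => haA (h ▸ hs)) (fun h => haC (h ▸ ht)) hadj
      exact Or.inr (Or.inl (by rw [h1.1, h1.2]))
    · have h1 := H.edges12 t s (hAsub t ht) (hCsub s hs)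
        (fun h => haA (h ▸ ht)) (fun h => haC (h ▸ hs)) hadj.symm
      exact Or.inr (Or.inl (by rw [h1.1, h1.2, Sym2.eq_swap]))
    · exact Or.inr (Or.inr (hCind s t hs ht hadj))
  have hxy : ¬ G.Adj x' y' := by
    intro hadj
    exact hx'ne_y' (H.edges12 x' y' hx'P1 hy'P2 hx'a hy'a hadj)
  have hz : v ∉ Q.support := by
    rw [hQsupp]
    rintro (h | h)
    · exact hvP1 (hAsub v h)
    · exact hvP2 (hCsub v h)
  have hznb : ∀ t ∈ Q.support, G.Adj v t → t = x' ∨ t = y' := by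
    intro t ht hadj
    rw [hQsupp] at ht
    rcases ht with ht | ht
    · exact Or.inl (hAnbr t ht hadj)
    · exact Or.inr (hCnbr t ht hadj)
  have hQlen : Q.length = A.length + (1 + C.length) := by
    rw [hQdef, length_append, length_cons, length_reverse]
    omega
  have hfin := reroute H.holeShortest hQpath hQind hxy hz hx'v hy'v hznb (hQlen ▸ hodd3)
  rw [hQlen] at hfin
  -- so both takeUntil-lengths are 1
  have htx1 : (H.P1.takeUntil x' hx'supp).length = 1 := by omega
  have hty1 : (H.P2.takeUntil y' hy'supp).length = 1 := by omega
  -- and then all neighbours of v on the hole lie in {apex, x', y'}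
  have hsubM : {w | w ∈ H.toPyramid.hole.support ∧ G.Adj v w} ⊆ {H.apex, x', y'} := by
    rintro w ⟨hw, hadj⟩
    rcases (hole_support_iff H).mp hw with h1 | h1
    · rcases mem_take_or_drop H.P1 hx'supp h1 with h2 | h2
      · rw [support_of_length_one htx1] at h2
        simp only [List.mem_cons, List.not_mem_nil, or_false] at h2
        rcases h2 with h2 | h2
        · exact Or.inl h2
        · exact Or.inr (Or.inl h2)
      · exact Or.inr (Or.inl (hAnbr w h2 hadj))
    · rcases mem_take_or_drop H.P2 hy'supp h1 with h2 | h2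
      · rw [support_of_length_one hty1] at h2
        simp only [List.mem_cons, List.not_mem_nil, or_false] at h2
        rcases h2 with h2 | h2
        · exact Or.inl h2
        · exact Or.inr (Or.inr h2)
      · exact Or.inr (Or.inr (hCnbr w h2 hadj))
  have hle := Set.ncard_le_ncard hsubM
    ((Set.finite_singleton y').insert x' |>.insert H.apex)
  have h3 := ncard_le_three H.apex x' y'
  omega

end Claim2


section Claim3

variable {G : SimpleGraph V} [DecidableEq V] (H : GreatPyramid G)

lemma claim3 {v : V} (hmaj : BigCMajor G H.toPyramid.hole v)
    (hA2 : ∀ w, w ∈ H.P2.support → w ≠ H.apex → ¬ G.Adj v w)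
    (hA3 : ∀ w, w ∈ H.P3.support → w ≠ H.apex → ¬ G.Adj v w) : False := by
  have hne := pyr_ne H
  have hvP1 := v_not_P1 H hmaj
  have hvP2 := v_not_P2 H hmaj
  have hvP3 := v_not_P3 H hmaj
  have h4 := hmaj.2
  have hhl := hole_length H
  have hs31 := H.short31
  have hs32 := H.short32
  have hp3 := p3_pos H
  have hpar := parity23 H
  set SM := {t | t ∈ H.P1.support ∧ G.Adj v t} with hSMdef
  have hMsub : ∀ w, w ∈ H.toPyramid.hole.support → G.Adj v w → w ∈ SM := by
    intro w hw hadj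
    rcases (hole_support_iff H).mp hw with h1 | h1
    · exact ⟨h1, hadj⟩
    · by_cases hwa : w = H.apex
      · exact ⟨hwa ▸ H.P1.start_mem_support, hadj⟩
      · exact absurd hadj (hA2 w h1 hwa)
  have hSMsub : ∀ s, s ∈ SM → s ∈ H.P1.support := fun s hs => hs.1
  have hSMne : SM.Nonempty := by
    have hMne : {w | w ∈ H.toPyramid.hole.support ∧ G.Adj v w}.Nonempty := by
      apply Set.nonempty_of_ncard_ne_zero
      omega
    obtain ⟨w, hw⟩ := hMne
    exact ⟨w, hMsub w hw.1 hw.2⟩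
  obtain ⟨β, hβsupp, hβSM, hβkey, hβmin⟩ :=
    exists_min_drop H.P1 H.isPath1 SM hSMsub hSMne
  obtain ⟨α, hαsupp, hαSM, hαkey, hαmin⟩ :=
    exists_min_take H.P1 H.isPath1 SM hSMsub hSMne
  by_cases hcase : α = β
  · -- all neighbours are equal to α : contradiction with 4 ≤ ncard
    subst hcase
    have hsub : {w | w ∈ H.toPyramid.hole.support ∧ G.Adj v w} ⊆ {α} := by
      rintro w ⟨hw, hadj⟩
      have hwSM := hMsub w hw hadj
      rcases mem_take_or_drop H.P1 hαsupp (hSMsub w hwSM) with h2 | h2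
      · exact hαkey w hwSM h2
      · exact hβkey w hwSM h2
    have hle := Set.ncard_le_ncard hsub (Set.finite_singleton α)
    rw [Set.ncard_singleton] at hle
    omega
  have hαβ : α ≠ β := hcase
  have hβa : β ≠ H.apex := by
    intro h
    subst h
    have hlen := hβmin α hαSM
    rw [dropUntil_start] at hlen
    have hle := Walk.length_dropUntil_le H.P1 (hSMsub α hαSM)
    have hsum := length_take_add_drop H.P1 (hSMsub α hαSM)
    have h0 : (H.P1.takeUntil α (hSMsub α hαSM)).length = 0 := by omega
    exact hαβ (length_take_zero _ h0)
  have hαb1 : α ≠ H.b1 := by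
    intro h
    have h0 : (H.P1.dropUntil α hαsupp).length = 0 := by
      rcases Nat.eq_zero_or_pos (H.P1.dropUntil α hαsupp).length with h0 | h0
      · exact h0
      · exact absurd h (ends_ne_of_path (H.isPath1.dropUntil hαsupp) h0)
    have hsum := length_take_add_drop H.P1 hαsupp
    have hlen := hαmin β hβSM
    have hle := Walk.length_takeUntil_le H.P1 (hSMsub β hβSM)
    have hsum2 := length_take_add_drop H.P1 (hSMsub β hβSM)
    have h1 : (H.P1.dropUntil β (hSMsub β hβSM)).length = 0 := by omega
    exact hαβ (h.trans (length_drop_zero _ h1).symm)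
  have hα_in_Tβ : α ∈ (H.P1.takeUntil β hβsupp).support := by
    rcases mem_take_or_drop H.P1 hβsupp hαsupp with h2 | h2
    · exact h2
    · exact absurd (hβkey α hαSM h2) hαβ
  set Tβ := H.P1.takeUntil β hβsupp with hTβdef
  set D := H.P1.dropUntil β hβsupp with hDdef
  set Tα := H.P1.takeUntil α hαsupp with hTαdef
  set mid := Tβ.dropUntil α hα_in_Tβ with hmiddef
  have hTβpath : Tβ.IsPath := H.isPath1.takeUntil hβsupp
  have hDpath : D.IsPath := H.isPath1.dropUntil hβsupp
  have hTαpath : Tα.IsPath := H.isPath1.takeUntil hαsupp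
  have hTαeq : Tα = Tβ.takeUntil α hα_in_Tβ :=
    (takeUntil_congr (take_spec H.P1 hβsupp).symm hαsupp).trans
      (takeUntil_append_left Tβ D hα_in_Tβ _)
  have hmidlen : Tα.length + mid.length = Tβ.length := by
    have h1 := length_take_add_drop Tβ hα_in_Tβ
    rw [← hTαeq, ← hmiddef] at h1
    exact h1
  have hsplitP1 : Tβ.length + D.length = H.P1.length := by
    have h1 := length_take_add_drop H.P1 hβsupp
    rw [← hTβdef, ← hDdef] at h1
    exact h1
  have hTαsubTβ : ∀ t, t ∈ Tα.support → t ∈ Tβ.support := by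
    intro t ht
    rw [hTαeq] at ht
    exact support_takeUntil_subset _ _ ht
  have hcover : ∀ t, t ∈ SM → t ∈ mid.support := by
    intro t htSM
    rcases mem_take_or_drop H.P1 hβsupp (hSMsub t htSM) with h2 | h2
    · rcases mem_take_or_drop Tβ hα_in_Tβ h2 with h3 | h3
      · have h5 : t ∈ Tα.support := by rw [hTαeq]; exact h3
        have h6 := hαkey t htSM h5
        rw [h6]
        exact mid.start_mem_support
      · exact h3
    · have h6 := hβkey t htSM h2
      rw [h6]
      exact mid.end_mem_support
  have hwindow : 3 ≤ mid.length := by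
    by_contra hcon
    push_neg at hcon
    have hb := ncard_le_support mid
      (M := {w | w ∈ H.toPyramid.hole.support ∧ G.Adj v w})
      (fun s hs => hcover s (hMsub s hs.1 hs.2))
    omega
  have hnadj : ¬ G.Adj α β := by
    intro hadj
    have h1 := (isInducedWalk_iff _).mp H.induced1 α β hαsupp hβsupp hadj
    have h2 := induced_sub_take H.isPath1 hβsupp h1 hα_in_Tβ Tβ.end_mem_support hadj.ne
    have h3 := induced_sub_drop hTβpath hα_in_Tβ h2 mid.start_mem_support
      mid.end_mem_support hadj.ne
    have h5 := edge_ends_length_one (hTβpath.dropUntil hα_in_Tβ) h3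
    rw [← hmiddef] at h5
    omega
  have hDTdisj : ∀ t, t ∈ D.support → t ∈ Tα.support → False := by
    intro t h1 h2
    have h3 := take_inter_drop H.isPath1 hβsupp (hTαsubTβ t h2) h1
    have h5 : β ∈ Tα.support := h3 ▸ h2
    exact hαβ (hαkey β hβSM h5).symm
  have hb1Tα : H.b1 ∉ Tα.support := fun h => hDTdisj H.b1 D.end_mem_support h
  have noDT : ∀ s t, s ∈ D.support → t ∈ Tα.support → ¬ G.Adj s t := by
    intro s t hsD htT hadj
    have h1 := (isInducedWalk_iff _).mp H.induced1 s t (support_dropUntil_subset _ _ hsD)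
      (support_takeUntil_subset _ _ htT) hadj
    conv at h1 => rw [← take_spec H.P1 hβsupp]
    rw [edges_append, List.mem_append] at h1
    rcases h1 with h1 | h1
    · replace h1 : s(s, t) ∈ Tβ.edges := h1
      have hsT : s ∈ Tβ.support := Tβ.fst_mem_support_of_mem_edges h1
      have hsβ : s = β := take_inter_drop H.isPath1 hβsupp hsT hsD
      conv at h1 => rw [← take_spec Tβ hα_in_Tβ]
      rw [edges_append, List.mem_append] at h1
      rcases h1 with h1 | h1
      · have h5 : s ∈ (Tβ.takeUntil α hα_in_Tβ).support :=
          (Tβ.takeUntil α hα_in_Tβ).fst_mem_support_of_mem_edges h1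
        rw [← hTαeq] at h5
        have h6 : β ∈ Tα.support := hsβ ▸ h5
        exact hαβ (hαkey β hβSM h6).symm
      · have htm : t ∈ mid.support :=
          (Tβ.dropUntil α hα_in_Tβ).snd_mem_support_of_mem_edges h1
        have htα : t = α := take_inter_drop hTβpath hα_in_Tβ
          (by rw [hTαeq] at htT; exact htT) htm
        have h7 : G.Adj β α := by rw [← hsβ, ← htα]; exact hadj
        exact hnadj h7.symm
    · replace h1 : s(s, t) ∈ D.edges := h1
      have htD : t ∈ D.support := D.snd_mem_support_of_mem_edges h1
      have htβ : t = β := take_inter_drop H.isPath1 hβsupp (hTαsubTβ t htT) htD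
      have h5 : β ∈ Tα.support := htβ ▸ htT
      exact hαβ (hαkey β hβSM h5).symm
  have haD : H.apex ∉ D.support := start_not_in_drop H.isPath1 hβsupp hβa
  have hDnbr : ∀ t, t ∈ D.support → G.Adj v t → t = β :=
    fun t ht hadj => hβkey t ⟨support_dropUntil_subset _ _ ht, hadj⟩ ht
  have hTαnbr : ∀ t, t ∈ Tα.support → G.Adj v t → t = α :=
    fun t ht hadj => hαkey t ⟨support_takeUntil_subset _ _ ht, hadj⟩ ht
  have haSMα : G.Adj v H.apex → H.apex = α := fun hadj =>
    hαkey H.apex ⟨H.P1.start_mem_support, hadj⟩ Tα.start_mem_support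
  have hP2nbr : ∀ t, t ∈ H.P2.support → G.Adj v t → t = α := by
    intro t ht hadj
    by_cases hta : t = H.apex
    · rw [hta]; exact haSMα (hta ▸ hadj)
    · exact absurd hadj (hA2 t ht hta)
  have hP3nbr : ∀ t, t ∈ H.P3.support → G.Adj v t → t = α := by
    intro t ht hadj
    by_cases hta : t = H.apex
    · rw [hta]; exact haSMα (hta ▸ hadj)
    · exact absurd hadj (hA3 t ht hta)
  have hDind : ∀ s t, s ∈ D.support → t ∈ D.support → G.Adj s t → s(s, t) ∈ D.edges := by
    intro s t hs ht hadj
    exact induced_sub_drop H.isPath1 hβsupp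
      ((isInducedWalk_iff _).mp H.induced1 s t (support_dropUntil_subset _ _ hs)
        (support_dropUntil_subset _ _ ht) hadj) hs ht hadj.ne
  have hTαind : ∀ s t, s ∈ Tα.support → t ∈ Tα.support → G.Adj s t →
      s(s, t) ∈ Tα.edges := by
    intro s t hs ht hadj
    exact induced_sub_take H.isPath1 hαsupp
      ((isInducedWalk_iff _).mp H.induced1 s t (support_takeUntil_subset _ _ hs)
        (support_takeUntil_subset _ _ ht) hadj) hs ht hadj.ne
  have haTα : H.apex ∈ Tα.support := Tα.start_mem_support
  -- mixed-block adjacency analyses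
  have mDP2 : ∀ s t, s ∈ D.support → t ∈ H.P2.support → G.Adj s t →
      s = H.b1 ∧ t = H.b2 := by
    intro s t hs ht hadj
    by_cases hta : t = H.apex
    · exact absurd (hta ▸ hadj) (noDT s H.apex hs haTα)
    · exact H.edges12 s t (support_dropUntil_subset _ _ hs) ht (fun h => haD (h ▸ hs)) hta hadj
  have mDP3 : ∀ s t, s ∈ D.support → t ∈ H.P3.support → G.Adj s t →
      s = H.b1 ∧ t = H.b3 := by
    intro s t hs ht hadj
    by_cases hta : t = H.apex
    · exact absurd (hta ▸ hadj) (noDT s H.apex hs haTα)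
    · exact H.edges13 s t (support_dropUntil_subset _ _ hs) ht (fun h => haD (h ▸ hs)) hta hadj
  have mP2Tα : ∀ s t, s ∈ H.P2.support → t ∈ Tα.support → G.Adj s t →
      s(s, t) ∈ H.P2.edges ∨ s(s, t) ∈ Tα.edges := by
    intro s t hs ht hadj
    by_cases hsa : s = H.apex
    · exact Or.inr (hTαind s t (hsa ▸ haTα) ht hadj)
    · by_cases hta : t = H.apex
      · exact Or.inl ((isInducedWalk_iff _).mp H.induced2 s t hs
          (hta ▸ H.P2.start_mem_support) hadj)
      · exact absurd (H.edges12 t s (support_takeUntil_subset _ _ ht) hs hta hsa hadj.symm).1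
          (fun h => hb1Tα (h ▸ ht))
  have mP3Tα : ∀ s t, s ∈ H.P3.support → t ∈ Tα.support → G.Adj s t →
      s(s, t) ∈ H.P3.edges ∨ s(s, t) ∈ Tα.edges := by
    intro s t hs ht hadj
    by_cases hsa : s = H.apex
    · exact Or.inr (hTαind s t (hsa ▸ haTα) ht hadj)
    · by_cases hta : t = H.apex
      · exact Or.inl ((isInducedWalk_iff _).mp H.induced3 s t hs
          (hta ▸ H.P3.start_mem_support) hadj)
      · exact absurd (H.edges13 t s (support_takeUntil_subset _ _ ht) hs hta hsa hadj.symm).1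
          (fun h => hb1Tα (h ▸ ht))
  -- the generalized rerouting path through b1 -- b' -- P' -- apex -- Tα
  have hmain : ∀ (b' : V) (hadj1b' : G.Adj H.b1 b') (P' : G.Walk H.apex b')
      (hP'path : P'.IsPath) (hP'ind : IsInducedWalk G P')
      (hP1P' : ∀ x, x ∈ H.P1.support → x ∈ P'.support → x = H.apex)
      (hmixed : ∀ s t, s ∈ D.support → t ∈ P'.support → G.Adj s t → s = H.b1 ∧ t = b')
      (hmixed2 : ∀ s t, s ∈ P'.support → t ∈ Tα.support → G.Adj s t →
        s(s, t) ∈ P'.edges ∨ s(s, t) ∈ Tα.edges)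
      (hP'nbr : ∀ t, t ∈ P'.support → G.Adj v t → t = α)
      (hvP' : v ∉ P'.support)
      (hb'Tα : b' ∉ Tα.support) (hb'D : b' ∉ D.support),
      Odd (D.length + (1 + (P'.length + Tα.length))) →
      H.toPyramid.hole.length ≤ D.length + (1 + (P'.length + Tα.length)) + 2 := by
    intro b' hadj1b' P' hP'path hP'ind hP1P' hmixed hmixed2 hP'nbr hvP' hb'Tα hb'D hodd
    have haTαtail : H.apex ∉ Tα.support.tail := by
      intro h
      have h1 := hTαpath.support_nodup
      rw [Tα.support_eq_cons, List.nodup_cons] at h1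
      exact h1.1 h
    set X : G.Walk b' α := P'.reverse.append Tα with hXdef
    have hXsupp : ∀ t, t ∈ X.support ↔ t ∈ P'.support ∨ t ∈ Tα.support := by
      intro t
      rw [hXdef, mem_support_append_iff, support_reverse, List.mem_reverse]
    have hXpath : X.IsPath := by
      rw [isPath_def, hXdef, support_append, List.nodup_append]
      refine ⟨hP'path.reverse.support_nodup, ?_, ?_⟩
      · have h1 := hTαpath.support_nodup
        rw [Tα.support_eq_cons] at h1
        exact h1.of_cons
      · rintro t ht1 _ ht2 rfl
        rw [support_reverse, List.mem_reverse] at ht1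
        have ht2' : t ∈ Tα.support := List.mem_of_mem_tail ht2
        have hta : t = H.apex := hP1P' t (support_takeUntil_subset _ _ ht2') ht1
        exact haTαtail (hta ▸ ht2)
    set Q : G.Walk β α := D.append (Walk.cons hadj1b' X) with hQdef
    have hQsupp : ∀ t, t ∈ Q.support ↔
        t ∈ D.support ∨ t ∈ P'.support ∨ t ∈ Tα.support := by
      intro t
      rw [hQdef, mem_support_append_iff, support_cons, List.mem_cons, hXsupp]
      constructor
      · rintro (h | h | h)
        · exact Or.inl h
        · exact Or.inl (h ▸ D.end_mem_support)
        · exact Or.inr h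
      · rintro (h | h)
        · exact Or.inl h
        · exact Or.inr (Or.inr h)
    have hQpath : Q.IsPath := by
      rw [isPath_def, hQdef, support_append, support_cons, List.tail_cons,
        List.nodup_append]
      refine ⟨hDpath.support_nodup, hXpath.support_nodup, ?_⟩
      rintro t ht1 _ ht2 rfl
      rw [hXsupp] at ht2
      rcases ht2 with ht2 | ht2
      · exact haD ((hP1P' t (support_dropUntil_subset _ _ ht1) ht2) ▸ ht1)
      · exact hDTdisj t ht1 ht2
    have hQedges : Q.edges =
        D.edges ++ (s(H.b1, b') :: (P'.reverse.edges ++ Tα.edges)) := by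
      rw [hQdef, edges_append, edges_cons, hXdef, edges_append]
    have hP'redges : ∀ e, e ∈ P'.reverse.edges ↔ e ∈ P'.edges := by
      intro e; rw [edges_reverse, List.mem_reverse]
    have hQind : ∀ s t, s ∈ Q.support → t ∈ Q.support → G.Adj s t →
        s(s, t) ∈ Q.edges := by
      intro s t hs ht hadj
      rw [hQsupp] at hs ht
      rw [hQedges, List.mem_append, List.mem_cons, List.mem_append, hP'redges]
      rcases hs with hs | hs | hs <;> rcases ht with ht | ht | ht
      · exact Or.inl (hDind s t hs ht hadj)
      · have h1 := hmixed s t hs ht hadj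
        exact Or.inr (Or.inl (by rw [h1.1, h1.2]))
      · exact absurd hadj (noDT s t hs ht)
      · have h1 := hmixed t s ht hs hadj.symm
        exact Or.inr (Or.inl (by rw [h1.1, h1.2, Sym2.eq_swap]))
      · exact Or.inr (Or.inr (Or.inl ((isInducedWalk_iff _).mp hP'ind s t hs ht hadj)))
      · rcases hmixed2 s t hs ht hadj with h1 | h1
        · exact Or.inr (Or.inr (Or.inl h1))
        · exact Or.inr (Or.inr (Or.inr h1))
      · exact absurd hadj.symm (noDT t s ht hs)
      · rcases hmixed2 t s ht hs hadj.symm with h1 | h1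
        · exact Or.inr (Or.inr (Or.inl (by rw [Sym2.eq_swap]; exact h1)))
        · exact Or.inr (Or.inr (Or.inr (by rw [Sym2.eq_swap]; exact h1)))
      · exact Or.inr (Or.inr (Or.inr (hTαind s t hs ht hadj)))
    have hxy : ¬ G.Adj β α := fun h => hnadj h.symm
    have hz : v ∉ Q.support := by
      rw [hQsupp]
      rintro (h | h | h)
      · exact hvP1 (support_dropUntil_subset _ _ h)
      · exact hvP' h
      · exact hvP1 (support_takeUntil_subset _ _ h)
    have hznb : ∀ t ∈ Q.support, G.Adj v t → t = β ∨ t = α := by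
      intro t ht hadj
      rw [hQsupp] at ht
      rcases ht with ht | ht | ht
      · exact Or.inl (hDnbr t ht hadj)
      · exact Or.inr (hP'nbr t ht hadj)
      · exact Or.inr (hTαnbr t ht hadj)
    have hQlen : Q.length = D.length + (1 + (P'.length + Tα.length)) := by
      rw [hQdef, length_append, length_cons, hXdef, length_append, length_reverse]
      omega
    have hfin := reroute H.holeShortest hQpath hQind hxy hz hβSM.2 hαSM.2 hznb
      (hQlen ▸ hodd)
    omega
  have hEW1 : ¬ Odd (D.length + (1 + (H.P2.length + Tα.length))) := by
    intro hodd
    have hfin := hmain H.b2 H.adj12 H.P2 H.isPath2 H.induced2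
      (fun x h1 h2 => mem_P1_P2 H h1 h2) mDP2 mP2Tα hP2nbr hvP2
      (fun h => b2_not_P1 H (support_takeUntil_subset _ _ h))
      (fun h => b2_not_P1 H (support_dropUntil_subset _ _ h)) hodd
    omega
  have hEW2 : ¬ Odd (D.length + (1 + (H.P3.length + Tα.length))) := by
    intro hodd
    have hfin := hmain H.b3 H.adj13 H.P3 H.isPath3 H.induced3
      (fun x h1 h2 => mem_P1_P3 H h1 h2) mDP3 mP3Tα hP3nbr hvP3
      (fun h => b3_not_P1 H (support_takeUntil_subset _ _ h))
      (fun h => b3_not_P1 H (support_dropUntil_subset _ _ h)) hodd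
    omega
  rw [Nat.odd_iff] at hEW1 hEW2 hpar
  omega

end Claim3




/-- a vertex major for a great pyramid with at most one neighbour in the
base has neighbours in exactly two of the three sets `V(Pi) \ {a}`. -/
theorem major_meets_exactly_two_paths (G : SimpleGraph V)
    (hnoJewel : ∀ (w : V) (c : G.Walk w w), IsShortestOddHole G c → ¬ Jewelled G c)
    (H : GreatPyramid G) (v : V) (hmaj : BigCMajor G H.toPyramid.hole v)
    (hbase : (({H.b1, H.b2, H.b3} : Set V) ∩ {w | G.Adj v w}).ncard ≤ 1) :
    ((∃ w ∈ H.P1.support, w ≠ H.apex ∧ G.Adj v w) ∧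
      (∃ w ∈ H.P2.support, w ≠ H.apex ∧ G.Adj v w) ∧
      (∀ w ∈ H.P3.support, w ≠ H.apex → ¬ G.Adj v w)) ∨
    ((∃ w ∈ H.P1.support, w ≠ H.apex ∧ G.Adj v w) ∧
      (∃ w ∈ H.P3.support, w ≠ H.apex ∧ G.Adj v w) ∧
      (∀ w ∈ H.P2.support, w ≠ H.apex → ¬ G.Adj v w)) ∨
    ((∃ w ∈ H.P2.support, w ≠ H.apex ∧ G.Adj v w) ∧
      (∃ w ∈ H.P3.support, w ≠ H.apex ∧ G.Adj v w) ∧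
      (∀ w ∈ H.P1.support, w ≠ H.apex → ¬ G.Adj v w)) := by
  classical
  by_cases hA1 : ∃ w ∈ H.P1.support, w ≠ H.apex ∧ G.Adj v w
  · by_cases hA2 : ∃ w ∈ H.P2.support, w ≠ H.apex ∧ G.Adj v w
    · by_cases hA3 : ∃ w ∈ H.P3.support, w ≠ H.apex ∧ G.Adj v w
      · exact (claim2 H hmaj hbase hA1 hA2 hA3).elim
      · push_neg at hA3
        exact Or.inl ⟨hA1, hA2, hA3⟩
    · push_neg at hA2
      have hA3 : ∃ w ∈ H.P3.support, w ≠ H.apex ∧ G.Adj v w := by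
        by_contra hA3
        push_neg at hA3
        exact claim3 H hmaj hA2 hA3
      exact Or.inr (Or.inl ⟨hA1, hA3, hA2⟩)
  · push_neg at hA1
    by_cases hA2 : ∃ w ∈ H.P2.support, w ≠ H.apex ∧ G.Adj v w
    · have hA3 : ∃ w ∈ H.P3.support, w ≠ H.apex ∧ G.Adj v w := by
        by_contra hA3
        push_neg at hA3
        exact claim3 H.flip (bigmajor_flip H hmaj) hA1 hA3
      exact Or.inr (Or.inr ⟨hA2, hA3, hA1⟩)
    · push_neg at hA2
      exfalso
      have hsub : {w | w ∈ H.toPyramid.hole.support ∧ G.Adj v w} ⊆ {H.apex} := by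
        rintro w ⟨hw, hadj⟩
        rcases (hole_support_iff H).mp hw with h | h
        · by_cases hwa : w = H.apex
          · exact hwa
          · exact absurd hadj (hA1 w h hwa)
        · by_cases hwa : w = H.apex
          · exact hwa
          · exact absurd hadj (hA2 w h hwa)
      have hle := Set.ncard_le_ncard hsub (Set.finite_singleton H.apex)
      rw [Set.ncard_singleton] at hle
      have h4 := hmaj.2
      omega

end SOH
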